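/- arXiv:2006.00425 — 9 statements merged into one kernel-verified Lean document; each statement's English description precedes it below -/
import Mathlib

section
/- Let E be a real inner product space, w : E → ℝ differentiable and 1-strongly convex, V the induced Bregman divergence, r : E → ℝ convex, F : E → ℝ differentiable with L-Lipschitz gradient for some L > 0, and Φ = F + r. Fix x, d ∈ E and η > 0. Let x⁺ be a minimizer over E of y ↦ ⟪d, y⟫ + (1/η)V(y,x) + r(y); set g = (x − x⁺)/η and e = d − ∇F(x). Then Φ(x⁺) − Φ(x) ≤ (η/2)‖e‖² − (η/2)(1 − ηL)‖g‖². -/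
lemma descent_lem {E : Type*} [NormedAddCommGroup E] [InnerProductSpace ℝ E]
    (F : E → ℝ) (gF : E → E)
    (hF : ∀ x : E, HasFDerivAt F (innerSL ℝ (gF x)) x)
    (L : ℝ) (hLip : ∀ x y : E, ‖gF x - gF y‖ ≤ L * ‖x - y‖)
    (x u : E) : F (x + u) ≤ F x + (inner ℝ (gF x) u : ℝ) + L/2 * ‖u‖^2 := by
  set φ : ℝ → ℝ := fun t => F (x + t • u) - t * (inner ℝ (gF x) u : ℝ) - L/2 * t^2 * ‖u‖^2 with hφdef
  have hc : ∀ t : ℝ, HasDerivAt (fun s : ℝ => x + s • u) u t := by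
    intro t
    simpa using ((hasDerivAt_id t).smul_const u).const_add x
  have hφ : ∀ t : ℝ, HasDerivAt φ
      ((inner ℝ (gF (x + t • u)) u : ℝ) - (inner ℝ (gF x) u : ℝ) - L * t * ‖u‖^2) t := by
    intro t
    have h1 := (hF (x + t • u)).comp_hasDerivAt t (hc t)
    have h2 : HasDerivAt (fun s : ℝ => s * (inner ℝ (gF x) u : ℝ)) (inner ℝ (gF x) u : ℝ) t :=
      hasDerivAt_mul_const _
    have h3 : HasDerivAt (fun s : ℝ => L/2 * s^2 * ‖u‖^2) (L * t * ‖u‖^2) t := by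
      have := ((hasDerivAt_pow 2 t).const_mul (L/2)).mul_const (‖u‖^2)
      refine this.congr_deriv ?_
      rw [show (2:ℕ) - 1 = 1 from rfl]
      ring
    exact (h1.sub h2).sub h3
  have hanti : AntitoneOn φ (Set.Icc (0:ℝ) 1) := by
    apply antitoneOn_of_deriv_nonpos (convex_Icc 0 1)
    · exact fun t _ => (hφ t).continuousAt.continuousWithinAt
    · exact fun t _ => (hφ t).differentiableAt.differentiableWithinAt
    · intro t ht
      rw [interior_Icc] at ht
      rw [(hφ t).deriv]
      have hb := hLip (x + t • u) x
      have hnorm : ‖(x + t • u) - x‖ = t * ‖u‖ := by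
        simp [norm_smul, abs_of_pos ht.1]
      rw [hnorm] at hb
      have hi : (inner ℝ (gF (x + t • u)) u : ℝ) - (inner ℝ (gF x) u : ℝ) ≤
          ‖gF (x + t • u) - gF x‖ * ‖u‖ := by
        have h' := real_inner_le_norm (gF (x + t • u) - gF x) u
        rw [inner_sub_left] at h'
        linarith
      nlinarith [norm_nonneg u, mul_le_mul_of_nonneg_right hb (norm_nonneg u)]
  have h01 := hanti (Set.left_mem_Icc.2 zero_le_one) (Set.right_mem_Icc.2 zero_le_one) zero_le_one
  simp only [hφdef, zero_smul, add_zero, one_smul, one_pow] at h01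
  norm_num at h01
  linarith

set_option maxHeartbeats 1000000 in
theorem pstorm_descent_inequality
    {E : Type*} [NormedAddCommGroup E] [InnerProductSpace ℝ E]
    (w : E → ℝ) (gw : E → E)
    (hw : ∀ x : E, HasFDerivAt w (innerSL ℝ (gw x)) x)
    (hsc : ∀ x y : E, w y ≥ w x + (inner ℝ (gw x) (y - x) : ℝ) + (1/2) * ‖y - x‖^2)
    (V : E → E → ℝ)
    (hV : ∀ y z : E, V y z = w y - w z - (inner ℝ (gw z) (y - z) : ℝ))
    (r : E → ℝ) (hr : ConvexOn ℝ Set.univ r)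
    (F : E → ℝ) (gF : E → E)
    (hF : ∀ x : E, HasFDerivAt F (innerSL ℝ (gF x)) x)
    (L : ℝ) (hL : 0 < L)
    (hLip : ∀ x y : E, ‖gF x - gF y‖ ≤ L * ‖x - y‖)
    (Φ : E → ℝ) (hΦ : ∀ x : E, Φ x = F x + r x)
    (x d : E) (η : ℝ) (hη : 0 < η)
    (xplus : E)
    (hxplus : ∀ y : E, (inner ℝ d xplus : ℝ) + (1/η) * V xplus x + r xplus ≤
      (inner ℝ d y : ℝ) + (1/η) * V y x + r y)
    (g e : E) (hg : g = η⁻¹ • (x - xplus)) (he : e = d - gF x) :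
    Φ xplus - Φ x ≤ (η/2) * ‖e‖^2 - (η/2) * (1 - η*L) * ‖g‖^2 := by
  set s : ℝ := ‖x - xplus‖^2 with hs
  have hs0 : 0 ≤ s := sq_nonneg _
  -- V lower bound
  have hVlow : (2:ℝ)⁻¹ * s ≤ V xplus x := by
    have h := hsc x xplus
    rw [hV]
    have : ‖xplus - x‖ = ‖x - xplus‖ := norm_sub_rev _ _
    rw [this] at h
    linarith
  have hVxx : V x x = 0 := by simp [hV]
  -- three-point strong convexity at minimizer, with parameter t
  have main : ∀ t : ℝ, 0 < t → t < 1 →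
      (inner ℝ d xplus : ℝ) + (1/η) * V xplus x + r xplus + ((1-t)/(2*η)) * s ≤
        (inner ℝ d x : ℝ) + r x := by
    intro t ht0 ht1
    set y : E := xplus + t • (x - xplus) with hy
    have hy2 : y = (1-t) • xplus + t • x := by rw [hy]; module
    have hxpy : xplus - y = (-t) • (x - xplus) := by rw [hy]; module
    have hxy : x - y = (1-t) • (x - xplus) := by rw [hy]; module
    have hyx : y - x = (1-t) • (xplus - x) := by rw [hy]; module
    -- strong convexity combination for w
    have h1 := hsc y xplus
    have h2 := hsc y x
    rw [hxpy] at h1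
    rw [hxy] at h2
    rw [real_inner_smul_right, norm_smul] at h1 h2
    have ha1 : |(-t)| = t := by rw [abs_neg, abs_of_pos ht0]
    have ha2 : |(1-t)| = 1 - t := abs_of_pos (by linarith)
    rw [Real.norm_eq_abs, ha1] at h1
    rw [Real.norm_eq_abs, ha2] at h2
    have hwcomb : w y ≤ (1-t) * w xplus + t * w x - (1/2) * (t * (1-t)) * s := by
      have c1 := mul_le_mul_of_nonneg_left h1 (by linarith : (0:ℝ) ≤ 1 - t)
      have c2 := mul_le_mul_of_nonneg_left h2 ht0.le
      have hms : (t * ‖x - xplus‖)^2 = t^2 * s := by rw [hs]; ring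
      have hms2 : ((1-t) * ‖x - xplus‖)^2 = (1-t)^2 * s := by rw [hs]; ring
      nlinarith [c1, c2]
    -- V at y
    have hVy : V y x ≤ (1-t) * V xplus x - (1/2) * (t * (1-t)) * s := by
      rw [hV, hV, hyx, real_inner_smul_right]
      nlinarith [hwcomb]
    -- r convexity
    have hry : r y ≤ (1-t) * r xplus + t * r x := by
      have := hr.2 (Set.mem_univ xplus) (Set.mem_univ x)
        (by linarith : (0:ℝ) ≤ 1 - t) ht0.le (by ring)
      rw [← hy2] at this
      simpa using this
    -- inner ℝ linearity
    have hdy : (inner ℝ d y : ℝ) = (1-t) * (inner ℝ d xplus : ℝ) + t * (inner ℝ d x : ℝ) := by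
      rw [hy2, inner_add_right, real_inner_smul_right, real_inner_smul_right]
    have hmin := hxplus y
    have hηinv : 0 < 1/η := by positivity
    have hchain : (inner ℝ d xplus : ℝ) + (1/η) * V xplus x + r xplus ≤
        (1-t) * ((inner ℝ d xplus : ℝ) + (1/η) * V xplus x + r xplus) +
        t * ((inner ℝ d x : ℝ) + r x) - (1/η) * ((1/2) * (t * (1-t)) * s) := by
      have h3 := mul_le_mul_of_nonneg_left hVy hηinv.le
      calc (inner ℝ d xplus : ℝ) + (1/η) * V xplus x + r xplus
          ≤ (inner ℝ d y : ℝ) + (1/η) * V y x + r y := hmin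
        _ ≤ _ := by rw [hdy]; linarith [h3, hry]
    have hfin : t * ((inner ℝ d xplus : ℝ) + (1/η) * V xplus x + r xplus + ((1-t)/(2*η)) * s) ≤
        t * ((inner ℝ d x : ℝ) + r x) := by
      have he2 : (1/η) * ((1/2) * (t * (1-t)) * s) = t * (((1-t)/(2*η)) * s) := by
        field_simp
      rw [he2] at hchain
      linarith
    exact le_of_mul_le_mul_left hfin ht0
  -- limit t → 0
  have key : (inner ℝ d xplus : ℝ) + (1/η) * V xplus x + r xplus + (1/(2*η)) * s ≤
      (inner ℝ d x : ℝ) + r x := by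
    apply le_of_forall_pos_le_add
    intro ε hε
    set t : ℝ := min (1/2) (η * ε / (s + 1)) with htdef
    have ht0 : 0 < t := by
      apply lt_min (by norm_num)
      positivity
    have ht1 : t < 1 := lt_of_le_of_lt (min_le_left _ _) (by norm_num)
    have h := main t ht0 ht1
    have hts : t * s / (2 * η) ≤ ε := by
      have htle : t ≤ η * ε / (s + 1) := min_le_right _ _
      have h1 : t * s ≤ (η * ε / (s + 1)) * s := mul_le_mul_of_nonneg_right htle hs0
      have h2 : (η * ε / (s + 1)) * s ≤ η * ε := by
        rw [div_mul_eq_mul_div, div_le_iff₀ (by positivity)]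
        nlinarith [mul_nonneg hη.le hε.le]
      rw [div_le_iff₀ (by positivity)]
      linarith [h1, h2, mul_nonneg hη.le hε.le]
    have hexp : ((1-t)/(2*η)) * s = (1/(2*η)) * s - t * s / (2 * η) := by ring
    linarith [h, hexp ▸ h]
  -- descent lemma for F
  have hdesc : F xplus ≤ F x + (inner ℝ (gF x) (xplus - x) : ℝ) + L/2 * ‖xplus - x‖^2 := by
    have := descent_lem F gF hF L hLip x (xplus - x)
    simpa using this
  have hnorm2 : ‖xplus - x‖^2 = s := by rw [hs, norm_sub_rev]
  rw [hnorm2] at hdesc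
  -- relate g, e
  have hηg : η • g = x - xplus := by
    rw [hg, smul_smul, mul_inv_cancel₀ hη.ne', one_smul]
  have hsg : s = η^2 * ‖g‖^2 := by
    rw [hs, ← hηg, norm_smul, Real.norm_eq_abs, abs_of_pos hη]
    ring
  have hxpx : xplus - x = (-η) • g := by
    rw [← neg_sub x xplus, ← hηg]; module
  have hinner1 : (inner ℝ (gF x) (xplus - x) : ℝ) - (inner ℝ d (xplus - x) : ℝ) =
      η * (inner ℝ e g : ℝ) := by
    rw [he, hxpx, ← inner_sub_left, inner_smul_right, inner_sub_left]
    have : (inner ℝ (gF x) g : ℝ) - inner ℝ d g = -(inner ℝ d g - inner ℝ (gF x) g) := by ring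
    rw [inner_sub_left]
    ring
  have hinner2 : (inner ℝ e g : ℝ) ≤ ‖e‖ * ‖g‖ := real_inner_le_norm e g
  have hamgm : ‖e‖ * ‖g‖ ≤ (1/2) * ‖e‖^2 + (1/2) * ‖g‖^2 := by nlinarith [sq_nonneg (‖e‖ - ‖g‖)]
  -- r bound from key and hVlow
  have hrb : r xplus - r x ≤ (inner ℝ d (x - xplus) : ℝ) - (1/η) * s := by
    have hV2 : (1/η) * ((2:ℝ)⁻¹ * s) ≤ (1/η) * V xplus x :=
      mul_le_mul_of_nonneg_left hVlow (by positivity)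
    have hid : (inner ℝ d (x - xplus) : ℝ) = (inner ℝ d x : ℝ) - (inner ℝ d xplus : ℝ) := by
      rw [inner_sub_right]
    have hcomp : (1/η) * ((2:ℝ)⁻¹ * s) + (1/(2*η)) * s = (1/η) * s := by
      field_simp; ring
    linarith [key, hV2]
  have hid2 : (inner ℝ d (x - xplus) : ℝ) = - (inner ℝ d (xplus - x) : ℝ) := by
    rw [← inner_neg_right]; congr 1; abel
  have hη2 : (1/η) * (η^2 * ‖g‖^2) = η * ‖g‖^2 := by field_simp
  rw [hΦ, hΦ]
  have hgoal : F xplus + r xplus - (F x + r x) ≤ η * (inner ℝ e g : ℝ) + (L/2) * s - (1/η) * s := by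
    have := hdesc
    nlinarith [hrb, hdesc, hinner1, hid2]
  rw [hsg] at hgoal
  have hLs : (L/2) * (η^2 * ‖g‖^2) = (η/2) * (η * L) * ‖g‖^2 := by ring
  nlinarith [hgoal, hinner2, hamgm, hη, hη2]
end

section
/- Let E be a real inner product space, w : E → ℝ differentiable and 1-strongly convex, V the induced Bregman divergence, and r : E → ℝ convex. Fix x, d ∈ E and η > 0, and let x⁺ be a minimizer over E of y ↦ ⟪d, y⟫ + (1/η)V(y,x) + r(y); set g = (x − x⁺)/η. Then ⟪d, g⟫ ≥ ‖g‖² + (1/η)(r(x⁺) − r(x)). -/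
theorem prox_gradient_mapping_inequality
    {E : Type*} [NormedAddCommGroup E] [InnerProductSpace ℝ E]
    (w : E → ℝ) (gw : E → E)
    (hw : ∀ x : E, HasFDerivAt w (innerSL ℝ (gw x)) x)
    (hsc : ∀ x y : E, w y ≥ w x + (inner ℝ (gw x) (y - x) : ℝ) + (1/2) * ‖y - x‖^2)
    (V : E → E → ℝ)
    (hV : ∀ y z : E, V y z = w y - w z - (inner ℝ (gw z) (y - z) : ℝ))
    (r : E → ℝ) (hr : ConvexOn ℝ Set.univ r)
    (x d : E) (η : ℝ) (hη : 0 < η)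
    (xplus : E)
    (hxplus : ∀ y : E, (inner ℝ d xplus : ℝ) + (1/η) * V xplus x + r xplus ≤
      (inner ℝ d y : ℝ) + (1/η) * V y x + r y)
    (g : E) (hg : g = η⁻¹ • (x - xplus)) :
    (inner ℝ d g : ℝ) ≥ ‖g‖^2 + (1/η) * (r xplus - r x) := by
  set u := x - xplus with hu
  set f : ℝ → ℝ := fun t =>
    (inner ℝ d (xplus + t • u) : ℝ) +
      (1/η) * (w (xplus + t • u) - w x - (inner ℝ (gw x) (xplus + t • u - x) : ℝ)) with hf
  have hc : HasDerivAt (fun t : ℝ => xplus + t • u) u 0 := by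
    simpa using ((hasDerivAt_id (0:ℝ)).smul_const u).const_add xplus
  have hwc : HasDerivAt (fun t : ℝ => w (xplus + t • u)) ((inner ℝ (gw xplus) u : ℝ)) 0 := by
    have h0 : xplus + (0:ℝ) • u = xplus := by simp
    have := (h0 ▸ hw xplus).comp_hasDerivAt 0 hc
    simp at this; exact this
  have hdc : HasDerivAt (fun t : ℝ => (inner ℝ d (xplus + t • u) : ℝ)) ((inner ℝ d u : ℝ)) 0 := by
    have := (innerSL ℝ d).hasFDerivAt.comp_hasDerivAt 0 hc
    simp at this; exact this
  have hgxc : HasDerivAt (fun t : ℝ => (inner ℝ (gw x) (xplus + t • u - x) : ℝ))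
      ((inner ℝ (gw x) u : ℝ)) 0 := by
    have := (innerSL ℝ (gw x)).hasFDerivAt.comp_hasDerivAt 0 (hc.sub_const x)
    simp at this; exact this
  set L : ℝ := (inner ℝ d u : ℝ) +
    (1/η) * ((inner ℝ (gw xplus) u : ℝ) - (inner ℝ (gw x) u : ℝ)) with hLdef
  have hfL : HasDerivAt f L 0 := by
    exact hdc.add (((hwc.sub_const (w x)).sub hgxc).const_mul (1/η))
  have hslope : ∀ t : ℝ, t ∈ Set.Ioc (0:ℝ) 1 → r xplus - r x ≤ (f t - f 0) / t := by
    intro t ht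
    have hconv := hr.2 (Set.mem_univ xplus) (Set.mem_univ x)
      (by linarith [ht.2] : (0:ℝ) ≤ 1 - t) (le_of_lt ht.1) (by ring)
    have hid : (1 - t) • xplus + t • x = xplus + t • u := by
      rw [hu]; module
    rw [hid] at hconv
    simp only [smul_eq_mul] at hconv
    have hy := hxplus (xplus + t • u)
    rw [hV, hV] at hy
    have h0 : f 0 = (inner ℝ d xplus : ℝ) +
        (1/η) * (w xplus - w x - (inner ℝ (gw x) (xplus - x) : ℝ)) := by
      simp [hf]
    have hft : f t = (inner ℝ d (xplus + t • u) : ℝ) +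
        (1/η) * (w (xplus + t • u) - w x - (inner ℝ (gw x) (xplus + t • u - x) : ℝ)) := rfl
    rw [le_div_iff₀ ht.1]
    have : f 0 + r xplus ≤ f t + r (xplus + t • u) := by
      rw [h0, hft]; linarith [hy]
    ring_nf at hconv this ⊢
    nlinarith [hconv, this]
  have hL : r xplus - r x ≤ L := by
    have htend : Filter.Tendsto (slope f 0) (nhdsWithin 0 (Set.Ioi 0)) (nhds L) := by
      have h := hasDerivAt_iff_tendsto_slope.mp hfL
      exact h.mono_left (nhdsWithin_mono 0 (fun y hy => ne_of_gt hy))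
    refine ge_of_tendsto htend ?_
    filter_upwards [Ioc_mem_nhdsGT_of_mem (Set.mem_Ico.mpr ⟨le_refl 0, zero_lt_one⟩)] with t ht
    have := hslope t ht
    simpa [slope_def_field] using this
  have hmono : ‖u‖^2 ≤ (inner ℝ (gw x) u : ℝ) - (inner ℝ (gw xplus) u : ℝ) := by
    have h1 := hsc x xplus
    have h2 := hsc xplus x
    have e1 : xplus - x = -u := by rw [hu]; abel
    rw [e1, inner_neg_right, norm_neg] at h1
    nlinarith [h1, h2]
  have hdu : (inner ℝ d u : ℝ) ≥ (1/η) * ‖u‖^2 + (r xplus - r x) := by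
    have hη' : 0 < 1/η := by positivity
    rw [hLdef] at hL
    have hm := mul_le_mul_of_nonneg_left hmono (le_of_lt hη')
    ring_nf at hL hm ⊢
    linarith [hL, hm]
  have hginner : (inner ℝ d g : ℝ) = η⁻¹ * (inner ℝ d u : ℝ) := by
    rw [hg, real_inner_smul_right]
  have hgnorm : ‖g‖^2 = η⁻¹^2 * ‖u‖^2 := by
    rw [hg, norm_smul, mul_pow]
    congr 1
    rw [Real.norm_eq_abs, sq_abs]
  rw [hginner, hgnorm]
  have hinv : η⁻¹ = 1/η := by rw [one_div]
  rw [hinv]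
  have hη' : (0:ℝ) ≤ 1/η := by positivity
  have := mul_le_mul_of_nonneg_left hdu hη'
  ring_nf at this ⊢
  linarith [this]
end

section
/- Let L > 0, σ ≥ 0, m > 0, m₀ > 0 be reals, K ≥ 1 an integer, (η_k) a sequence of positive reals, and (β_k) a sequence with β_k ∈ (0,1) for all k. Let (Φ_k) be a real sequence and (E_k), (Ḡ_k) nonnegative real sequences such that: Φ_k ≥ Φ* for all k ≤ K, where Φ* ∈ ℝ; E_0 ≤ σ²/m₀; for every 0 ≤ k ≤ K−1, Φ_{k+1} − Φ_k ≤ (η_k/2)(2 − η_k L) E_k − (η_k/4)(1 − η_k L) Ḡ_k and E_{k+1} ≤ 2β_k²σ²/m + (4(1−β_k)²η_k²L²/m) Ḡ_k + (1−β_k)²(1 + 4η_k²L²/m) E_k; and for every 0 ≤ k ≤ K−1 the parameter conditions (1/4)(1 − η_k L) − (η_k/(5 m η_{k+1}))(1−β_k)² > 0 and (η_k/2)(2 − η_k L) − 1/(20 η_k L²) + (1−β_k)²(1 + 4η_k²L²/m)/(20 η_{k+1} L²) ≤ 0 hold. Then ∑_{k=0}^{K−1} [ (η_k/4)(1 − η_k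 L) − (η_k²/(5 m η_{k+1}))(1−β_k)² ] Ḡ_k ≤ Φ_0 − Φ* + σ²/(20 m₀ η_0 L²) + ∑_{k=0}^{K−1} β_k²σ²/(10 m η_{k+1} L²). -/
theorem pstorm_generic_varying_stepsize
    (L σ m m₀ : ℝ) (hL : 0 < L) (hσ : 0 ≤ σ) (hm : 0 < m) (hm₀ : 0 < m₀)
    (K : ℕ) (hK : 1 ≤ K)
    (η β : ℕ → ℝ) (hη : ∀ k, 0 < η k) (hβ : ∀ k, β k ∈ Set.Ioo (0:ℝ) 1)
    (Φ E G : ℕ → ℝ) (Φstar : ℝ)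
    (hΦ : ∀ k ≤ K, Φstar ≤ Φ k)
    (hE : ∀ k, 0 ≤ E k) (hG : ∀ k, 0 ≤ G k)
    (hE0 : E 0 ≤ σ^2 / m₀)
    (hdesc : ∀ k < K, Φ (k+1) - Φ k ≤
      (η k / 2) * (2 - η k * L) * E k - (η k / 4) * (1 - η k * L) * G k)
    (herr : ∀ k < K, E (k+1) ≤ 2 * (β k)^2 * σ^2 / m
      + (4 * (1 - β k)^2 * (η k)^2 * L^2 / m) * G k
      + (1 - β k)^2 * (1 + 4 * (η k)^2 * L^2 / m) * E k)
    (hcond1 : ∀ k < K,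
      0 < (1/4) * (1 - η k * L) - (η k / (5 * m * η (k+1))) * (1 - β k)^2)
    (hcond2 : ∀ k < K, (η k / 2) * (2 - η k * L) - 1 / (20 * η k * L^2)
      + (1 - β k)^2 * (1 + 4 * (η k)^2 * L^2 / m) / (20 * η (k+1) * L^2) ≤ 0) :
    ∑ k ∈ Finset.range K,
        ((η k / 4) * (1 - η k * L) - ((η k)^2 / (5 * m * η (k+1))) * (1 - β k)^2) * G k
      ≤ Φ 0 - Φstar + σ^2 / (20 * m₀ * η 0 * L^2)
        + ∑ k ∈ Finset.range K, (β k)^2 * σ^2 / (10 * m * η (k+1) * L^2) := by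
  set V : ℕ → ℝ := fun k => Φ k + E k / (20 * η k * L^2) with hV
  have hL2 : (0:ℝ) < L^2 := by positivity
  -- key per-step inequality
  have key : ∀ k < K,
      ((η k / 4) * (1 - η k * L) - ((η k)^2 / (5 * m * η (k+1))) * (1 - β k)^2) * G k
        ≤ (V k - V (k+1)) + (β k)^2 * σ^2 / (10 * m * η (k+1) * L^2) := by
    intro k hk
    have hηk := hη k
    have hηk1 := hη (k+1)
    have hb : (0:ℝ) < 20 * η (k+1) * L^2 := by positivity
    have h1 := hdesc k hk
    have h2 : E (k+1) / (20 * η (k+1) * L^2)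
        ≤ (2 * (β k)^2 * σ^2 / m + (4 * (1 - β k)^2 * (η k)^2 * L^2 / m) * G k
          + (1 - β k)^2 * (1 + 4 * (η k)^2 * L^2 / m) * E k) / (20 * η (k+1) * L^2) :=
      div_le_div_of_nonneg_right (herr k hk) hb.le |>.trans_eq rfl
    have e1 : (4 * (1 - β k)^2 * (η k)^2 * L^2 / m) * G k / (20 * η (k+1) * L^2)
        = ((η k)^2 / (5 * m * η (k+1))) * (1 - β k)^2 * G k := by
      field_simp; ring
    have e2 : (2 * (β k)^2 * σ^2 / m) / (20 * η (k+1) * L^2)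
        = (β k)^2 * σ^2 / (10 * m * η (k+1) * L^2) := by
      field_simp; ring
    have h2' : E (k+1) / (20 * η (k+1) * L^2)
        ≤ (β k)^2 * σ^2 / (10 * m * η (k+1) * L^2)
          + ((η k)^2 / (5 * m * η (k+1))) * (1 - β k)^2 * G k
          + (1 - β k)^2 * (1 + 4 * (η k)^2 * L^2 / m) * E k / (20 * η (k+1) * L^2) := by
      calc E (k+1) / (20 * η (k+1) * L^2) ≤ _ := h2
        _ = _ := by rw [add_div, add_div, e1, e2]
    have h3 : ((η k / 2) * (2 - η k * L) - 1 / (20 * η k * L^2)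
        + (1 - β k)^2 * (1 + 4 * (η k)^2 * L^2 / m) / (20 * η (k+1) * L^2)) * E k ≤ 0 :=
      mul_nonpos_of_nonpos_of_nonneg (hcond2 k hk) (hE k)
    have e3 : ((η k / 2) * (2 - η k * L) - 1 / (20 * η k * L^2)
        + (1 - β k)^2 * (1 + 4 * (η k)^2 * L^2 / m) / (20 * η (k+1) * L^2)) * E k
        = (η k / 2) * (2 - η k * L) * E k - E k / (20 * η k * L^2)
          + (1 - β k)^2 * (1 + 4 * (η k)^2 * L^2 / m) * E k / (20 * η (k+1) * L^2) := by
      ring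
    rw [e3] at h3
    simp only [hV]
    linarith
  have hsum : ∑ k ∈ Finset.range K,
      ((η k / 4) * (1 - η k * L) - ((η k)^2 / (5 * m * η (k+1))) * (1 - β k)^2) * G k
      ≤ ∑ k ∈ Finset.range K,
        ((V k - V (k+1)) + (β k)^2 * σ^2 / (10 * m * η (k+1) * L^2)) := by
    apply Finset.sum_le_sum
    intro k hk
    exact key k (Finset.mem_range.mp hk)
  rw [Finset.sum_add_distrib, Finset.sum_range_sub' V K] at hsum
  have hV0 : V 0 ≤ Φ 0 + σ^2 / (20 * m₀ * η 0 * L^2) := by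
    have h : E 0 / (20 * η 0 * L^2) ≤ (σ^2 / m₀) / (20 * η 0 * L^2) :=
      div_le_div_of_nonneg_right hE0 (by have := hη 0; positivity)
    have e : (σ^2 / m₀) / (20 * η 0 * L^2) = σ^2 / (20 * m₀ * η 0 * L^2) := by
      field_simp
    simp only [hV]
    linarith [e ▸ h]
  clear_value V
  have hVK : Φstar ≤ V K := by
    have h1 : Φstar ≤ Φ K := hΦ K le_rfl
    have h2 : 0 ≤ E K / (20 * η K * L^2) := by have := hη K; have := hE K; positivity
    simp only [hV]; linarith
  linarith
end

section
/- Let L > 0 and 0 < η ≤ 4^{1/3}/8 be reals and m ≥ 1 an integer (or real). For every integer k ≥ 0 define η_k = η/(L(k+4)^{1/3}) and β_k = (1 + 24η_k²L² − η_{k+1}/η_k)/(1 + 4η_k²L²). Then for every k ≥ 0: β_k ∈ (0,1), (1/4)(1 − η_k L) − (η_k/(5 m η_{k+1}))(1−β_k)² > 0, and (η_k/2)(2 − η_k L) − 1/(20 η_k L²) + (1−β_k)²(1 + 4η_k²L²/m)/(20 η_{k+1} L²) ≤ 0. -/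
private lemma cube_rpow_third (x : ℝ) (hx : 0 ≤ x) : (x ^ ((1:ℝ)/3))^3 = x := by
  rw [← Real.rpow_natCast (x ^ ((1:ℝ)/3)) 3, ← Real.rpow_mul hx]
  norm_num

set_option maxHeartbeats 2000000 in
theorem pstorm_varying_parameter_conditions
    (L η m : ℝ) (hL : 0 < L) (hη : 0 < η) (hη2 : η ≤ (4:ℝ)^((1:ℝ)/3) / 8)
    (hm : 1 ≤ m)
    (ηk βk : ℕ → ℝ)
    (hηk : ∀ k : ℕ, ηk k = η / (L * ((k:ℝ) + 4)^((1:ℝ)/3)))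
    (hβk : ∀ k : ℕ, βk k =
      (1 + 24 * (ηk k)^2 * L^2 - ηk (k+1) / ηk k) / (1 + 4 * (ηk k)^2 * L^2)) :
    ∀ k : ℕ, βk k ∈ Set.Ioo (0:ℝ) 1
      ∧ 0 < (1/4) * (1 - ηk k * L) - (ηk k / (5 * m * ηk (k+1))) * (1 - βk k)^2
      ∧ (ηk k / 2) * (2 - ηk k * L) - 1 / (20 * ηk k * L^2)
        + (1 - βk k)^2 * (1 + 4 * (ηk k)^2 * L^2 / m) / (20 * ηk (k+1) * L^2) ≤ 0 := by
  intro k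
  obtain ⟨t, ht_def⟩ : ∃ t : ℝ, t = ((k:ℝ) + 4) ^ ((1:ℝ)/3) := ⟨_, rfl⟩
  obtain ⟨s, hs_def⟩ : ∃ s : ℝ, s = ((k:ℝ) + 5) ^ ((1:ℝ)/3) := ⟨_, rfl⟩
  have hk4 : (0:ℝ) < (k:ℝ) + 4 := by positivity
  have hk5 : (0:ℝ) < (k:ℝ) + 5 := by positivity
  have ht : 0 < t := ht_def ▸ Real.rpow_pos_of_pos hk4 _
  have hs : 0 < s := hs_def ▸ Real.rpow_pos_of_pos hk5 _
  have hts : t < s := by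
    rw [ht_def, hs_def]
    apply Real.rpow_lt_rpow hk4.le (by linarith) (by norm_num)
  have ht3 : t ^ 3 = (k:ℝ) + 4 := by rw [ht_def]; exact cube_rpow_third _ hk4.le
  have hs3 : s ^ 3 = (k:ℝ) + 5 := by rw [hs_def]; exact cube_rpow_third _ hk5.le
  have hcube : s ^ 3 = t ^ 3 + 1 := by rw [ht3, hs3]; ring
  have ht4 : (4:ℝ) ≤ t ^ 3 := by
    rw [ht3]; have : (0:ℝ) ≤ (k:ℝ) := Nat.cast_nonneg k; linarith
  have h8η : 8 * η ≤ t := by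
    have h1 : (4:ℝ) ^ ((1:ℝ)/3) ≤ t := by
      rw [ht_def]
      apply Real.rpow_le_rpow (by norm_num) (by have : (0:ℝ) ≤ (k:ℝ) := Nat.cast_nonneg k; linarith) (by norm_num)
    linarith
  have hm0 : (0:ℝ) < m := by linarith
  have hL' : L ≠ 0 := hL.ne'
  have ht' : t ≠ 0 := ht.ne'
  have hs' : s ≠ 0 := hs.ne'
  have hη' : η ≠ 0 := hη.ne'
  have hm' : m ≠ 0 := hm0.ne'
  have hηkk : ηk k = η / (L * t) := by rw [hηk k, ← ht_def]
  have hηk1 : ηk (k+1) = η / (L * s) := by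
    rw [hηk (k+1), show (((k+1:ℕ)):ℝ) + 4 = (k:ℝ) + 5 by push_cast; ring, ← hs_def]
  -- key quantitative facts
  have h5s16t : 5 * s < 16 * t := by
    by_contra h
    push_neg at h
    have hcub : (16 * t) ^ 3 ≤ (5 * s) ^ 3 := by
      apply pow_le_pow_left₀ (by positivity) h
    have e1 : (16 * t) ^ 3 = 4096 * t ^ 3 := by ring
    have e2 : (5 * s) ^ 3 = 125 * s ^ 3 := by ring
    rw [e1, e2] at hcub
    linarith
  have h64 : 64 * η ^ 2 ≤ t ^ 2 := by
    have h := mul_self_le_mul_self (by positivity : (0:ℝ) ≤ 8 * η) h8η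
    linarith [h]
  have h20s : 20 * η ^ 2 * s < t ^ 3 := by
    have hA := mul_le_mul_of_nonneg_right h64 hs.le
    have hB := mul_lt_mul_of_pos_left h5s16t (show (0:ℝ) < t ^ 2 by positivity)
    have eA : 64 * η ^ 2 * s = 64 * (η ^ 2 * s) := by ring
    have eB1 : t ^ 2 * (5 * s) = 5 * (t ^ 2 * s) := by ring
    have eB2 : t ^ 2 * (16 * t) = 16 * t ^ 3 := by ring
    rw [eA] at hA
    rw [eB1, eB2] at hB
    linarith
  have h20div : 20 * η ^ 2 / t ^ 2 < t / s := by
    rw [div_lt_div_iff₀ (by positivity) hs]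
    have e : t * t ^ 2 = t ^ 3 := by ring
    rw [e]
    exact h20s
  have hDpos : (0:ℝ) < 1 + 4 * η ^ 2 / t ^ 2 := by positivity
  have hD1 : (1:ℝ) ≤ 1 + 4 * η ^ 2 / t ^ 2 := by
    have : (0:ℝ) ≤ 4 * η ^ 2 / t ^ 2 := by positivity
    linarith
  have hts1 : t / s < 1 := (div_lt_one hs).mpr hts
  -- value of βk k
  have hβval : βk k = (1 + 24 * η ^ 2 / t ^ 2 - t / s) / (1 + 4 * η ^ 2 / t ^ 2) := by
    rw [hβk k, hηkk, hηk1]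
    rw [show (1:ℝ) + 24 * (η / (L * t)) ^ 2 * L ^ 2 - (η / (L * s)) / (η / (L * t))
        = 1 + 24 * η ^ 2 / t ^ 2 - t / s by field_simp,
      show (1:ℝ) + 4 * (η / (L * t)) ^ 2 * L ^ 2 = 1 + 4 * η ^ 2 / t ^ 2 by
        field_simp]
  obtain ⟨q, hq_def⟩ : ∃ q : ℝ, q = (t / s - 20 * η ^ 2 / t ^ 2) / (1 + 4 * η ^ 2 / t ^ 2) :=
    ⟨_, rfl⟩
  have hq1 : 1 - βk k = q := by
    rw [hq_def, hβval, one_sub_div hDpos.ne']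
    congr 1
    ring
  have hn_pos : 0 < t / s - 20 * η ^ 2 / t ^ 2 := sub_pos.mpr h20div
  have hq_pos : 0 < q := by rw [hq_def]; exact div_pos hn_pos hDpos
  have hq_lt : q < t / s := by
    rw [hq_def]
    have h1 : (t / s - 20 * η ^ 2 / t ^ 2) / (1 + 4 * η ^ 2 / t ^ 2)
        ≤ t / s - 20 * η ^ 2 / t ^ 2 := div_le_self hn_pos.le hD1
    have h2 : 0 < 20 * η ^ 2 / t ^ 2 := by positivity
    linarith
  refine ⟨?_, ?_, ?_⟩
  · -- β ∈ (0,1)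
    rw [hβval]
    constructor
    · apply div_pos _ hDpos
      have h2 : 0 < 24 * η ^ 2 / t ^ 2 := by positivity
      linarith
    · rw [div_lt_one hDpos]
      have hsplit : 24 * η ^ 2 / t ^ 2 - 20 * η ^ 2 / t ^ 2 = 4 * η ^ 2 / t ^ 2 := by ring
      linarith
  · -- second condition
    have er1 : η / (L * t) * L = η / t := by
      field_simp
    have er2 : (η / (L * t)) / (5 * m * (η / (L * s))) = s / (5 * m * t) := by
      rw [div_eq_div_iff (by positivity) (by positivity)]
      field_simp
    rw [hηkk, hηk1, hq1, er1, er2]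
    have hq_sq : q ^ 2 < (t / s) ^ 2 := by
      have h := mul_self_lt_mul_self hq_pos.le hq_lt
      have e1 : q * q = q ^ 2 := by ring
      have e2 : t / s * (t / s) = (t / s) ^ 2 := by ring
      rw [e1, e2] at h
      exact h
    have h7 : s / (5 * m * t) * q ^ 2 < s / (5 * m * t) * (t / s) ^ 2 := by
      apply mul_lt_mul_of_pos_left hq_sq (by positivity)
    have h8' : s / (5 * m * t) * (t / s) ^ 2 = t / (5 * m * s) := by
      field_simp
    have h9 : t / (5 * m * s) ≤ t / (5 * s) := by
      rw [div_le_div_iff₀ (by positivity) (by positivity)]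
      have h := mul_le_mul_of_nonneg_right hm (show (0:ℝ) ≤ 5 * t * s by positivity)
      linarith [h]
    have h10 : t / (5 * s) < 1 / 5 := by
      rw [div_lt_div_iff₀ (by positivity) (by norm_num)]
      linarith
    have h11 : η / t ≤ 1 / 8 := by
      rw [div_le_div_iff₀ ht (by norm_num)]
      linarith
    linarith [h7, h9, h10, h11, h8' ▸ h7]
  · -- third condition
    rw [hηkk, hηk1, hq1]
    have e3 : (η / (L * t) / 2) * (2 - η / (L * t) * L) - 1 / (20 * (η / (L * t)) * L ^ 2)
        + q ^ 2 * (1 + 4 * (η / (L * t)) ^ 2 * L ^ 2 / m) / (20 * (η / (L * s)) * L ^ 2)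
        = (10 * η ^ 2 * (2 - η / t) / t - t + q ^ 2 * (1 + 4 * η ^ 2 / (m * t ^ 2)) * s)
          / (20 * η * L) := by
      field_simp
      ring
    rw [e3]
    apply div_nonpos_of_nonpos_of_nonneg _ (by positivity)
    -- bound the numerator
    have bi : 1 + 4 * η ^ 2 / (m * t ^ 2) ≤ 1 + 4 * η ^ 2 / t ^ 2 := by
      have : 4 * η ^ 2 / (m * t ^ 2) ≤ 4 * η ^ 2 / t ^ 2 := by
        rw [div_le_div_iff₀ (by positivity) (by positivity)]
        have h := mul_le_mul_of_nonneg_right hm (show (0:ℝ) ≤ 4 * η ^ 2 * t ^ 2 by positivity)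
        linarith [h]
      linarith
    have bii : q ^ 2 * (1 + 4 * η ^ 2 / t ^ 2)
        = (t / s - 20 * η ^ 2 / t ^ 2) ^ 2 / (1 + 4 * η ^ 2 / t ^ 2) := by
      rw [hq_def]
      rw [div_pow, div_mul_eq_mul_div, div_eq_div_iff (by positivity) hDpos.ne']
      ring
    have biii : (t / s - 20 * η ^ 2 / t ^ 2) ^ 2 / (1 + 4 * η ^ 2 / t ^ 2)
        ≤ (t / s - 20 * η ^ 2 / t ^ 2) ^ 2 := div_le_self (sq_nonneg _) hD1
    have b1 : q ^ 2 * (1 + 4 * η ^ 2 / (m * t ^ 2)) ≤ (t / s - 20 * η ^ 2 / t ^ 2) ^ 2 := by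
      have h1 : q ^ 2 * (1 + 4 * η ^ 2 / (m * t ^ 2)) ≤ q ^ 2 * (1 + 4 * η ^ 2 / t ^ 2) :=
        mul_le_mul_of_nonneg_left bi (sq_nonneg q)
      linarith [bii ▸ h1, biii]
    have b3eq : (t / s - 20 * η ^ 2 / t ^ 2) ^ 2 * s
        = t ^ 2 / s - 40 * η ^ 2 / t + 400 * η ^ 4 * s / t ^ 4 := by
      field_simp
      ring
    have b4 : q ^ 2 * (1 + 4 * η ^ 2 / (m * t ^ 2)) * s
        ≤ t ^ 2 / s - 40 * η ^ 2 / t + 400 * η ^ 4 * s / t ^ 4 := by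
      have := mul_le_mul_of_nonneg_right b1 hs.le
      linarith [b3eq ▸ this]
    have b5 : 10 * η ^ 2 * (2 - η / t) / t = 20 * η ^ 2 / t - 10 * η ^ 3 / t ^ 2 := by
      field_simp
      ring
    have b6 : 400 * η ^ 4 * s / t ^ 4 ≤ 20 * η ^ 2 / t := by
      rw [div_le_div_iff₀ (by positivity) ht]
      have h := mul_le_mul_of_nonneg_left h20s.le (show (0:ℝ) ≤ 20 * η ^ 2 * t by positivity)
      linarith [h]
    have b7 : t ^ 2 / s ≤ t := by
      rw [div_le_iff₀ hs]
      have h := mul_le_mul_of_nonneg_left hts.le ht.le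
      linarith [h]
    have b8 : 0 ≤ 10 * η ^ 3 / t ^ 2 := by positivity
    rw [b5]
    have e1 : 20 * η ^ 2 / t - 10 * η ^ 3 / t ^ 2 - t
          + q ^ 2 * (1 + 4 * η ^ 2 / (m * t ^ 2)) * s
        = (q ^ 2 * (1 + 4 * η ^ 2 / (m * t ^ 2)) * s
            - (t ^ 2 / s - 40 * η ^ 2 / t + 400 * η ^ 4 * s / t ^ 4))
          + (400 * η ^ 4 * s / t ^ 4 - 20 * η ^ 2 / t)
          + (t ^ 2 / s - t) + (0 - 10 * η ^ 3 / t ^ 2) := by ring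
    rw [e1]
    have c1 : q ^ 2 * (1 + 4 * η ^ 2 / (m * t ^ 2)) * s
        - (t ^ 2 / s - 40 * η ^ 2 / t + 400 * η ^ 4 * s / t ^ 4) ≤ 0 := by linarith [b4]
    have c2 : 400 * η ^ 4 * s / t ^ 4 - 20 * η ^ 2 / t ≤ 0 := by linarith [b6]
    have c3 : t ^ 2 / s - t ≤ 0 := by linarith [b7]
    have c4 : (0:ℝ) - 10 * η ^ 3 / t ^ 2 ≤ 0 := by linarith [b8]
    linarith [c1, c2, c3, c4]
end

section
/- For every integer K ≥ 1, ∑_{k=0}^{K−1} (k+5)^{1/3} ( 1 − (k+4)^{1/3}/(k+5)^{1/3} )² ≤ 1/(6·9^{1/3}). -/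
open Real

set_option maxHeartbeats 1000000 in
private lemma step' (x : ℝ) (hx : 4 ≤ x) :
    (x+1)^((1:ℝ)/3) * (1 - x^((1:ℝ)/3)/(x+1)^((1:ℝ)/3))^2
      ≤ 1/(6*(x-1)^((2:ℝ)/3)) - 1/(6*x^((2:ℝ)/3)) := by
  have hx0 : (0:ℝ) < x := by linarith
  have hx1 : (0:ℝ) < x - 1 := by linarith
  have hx2 : (0:ℝ) < x + 1 := by linarith
  set a := x^((1:ℝ)/3) with hadef
  set b := (x+1)^((1:ℝ)/3) with hbdef
  set c := (x-1)^((1:ℝ)/3) with hcdef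
  have ha : 0 < a := Real.rpow_pos_of_pos hx0 _
  have hb : 0 < b := Real.rpow_pos_of_pos hx2 _
  have hc : 0 < c := Real.rpow_pos_of_pos hx1 _
  have cube : ∀ y : ℝ, 0 < y → (y^((1:ℝ)/3))^3 = y := by
    intro y hy
    rw [← Real.rpow_natCast (y^((1:ℝ)/3)) 3, ← Real.rpow_mul hy.le]
    norm_num
  have ha3 : a^3 = x := cube x hx0
  have hb3 : b^3 = x + 1 := cube (x+1) hx2
  have hc3 : c^3 = x - 1 := cube (x-1) hx1
  have hab : a ≤ b := Real.rpow_le_rpow hx0.le (by linarith) (by norm_num)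
  have hsq : ∀ y : ℝ, 0 < y → y^((2:ℝ)/3) = (y^((1:ℝ)/3))^2 := by
    intro y hy
    rw [← Real.rpow_natCast (y^((1:ℝ)/3)) 2, ← Real.rpow_mul hy.le]
    norm_num
  rw [hsq _ hx1, hsq _ hx0, ← hadef, ← hcdef]
  -- Goal: b*(1-a/b)^2 ≤ 1/(6*c^2) - 1/(6*a^2)
  have h1 : b*(1-a/b)^2 = (b-a)^2/b := by field_simp
  have hba : (b-a)*(b^2+a*b+a^2) = 1 := by linear_combination hb3 - ha3
  have hSpos : (0:ℝ) < b^2+a*b+a^2 := by positivity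
  have hS : 3*a^2 ≤ b^2+a*b+a^2 := by nlinarith [mul_le_mul_of_nonneg_left hab ha.le, pow_le_pow_left₀ ha.le hab 2]
  have h9 : 9*a^5 ≤ b*(b^2+a*b+a^2)^2 := by nlinarith [hS, hab, ha.le, sq_nonneg (b^2+a*b+a^2), mul_le_mul (pow_le_pow_left₀ (by positivity) hS 2) hab ha.le (by positivity : (0:ℝ) ≤ (b^2+a*b+a^2)^2)]
  have hstepA : (b-a)^2/b ≤ 1/(9*a^5) := by
    rw [div_le_div_iff₀ hb (by positivity)]
    have hd : b - a = 1/(b^2+a*b+a^2) := by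
      rw [eq_div_iff hSpos.ne']; linarith [hba]
    rw [hd, div_pow, div_mul_eq_mul_div, div_le_iff₀ (by positivity)]
    nlinarith [h9]
  have hkey : c^2*(3*a^3+2) ≤ 3*a^5 := by
    apply le_of_pow_le_pow_left₀ (n := 3) (by norm_num) (by positivity)
    calc (c^2*(3*a^3+2))^3 = (c^3)^2*(3*a^3+2)^3 := by ring
      _ = (x-1)^2*(3*x+2)^3 := by rw [hc3, ha3]
      _ ≤ 27*x^5 := by nlinarith [hx, sq_nonneg x, sq_nonneg (x-4)]
      _ = (3*a^5)^3 := by rw [show (3*a^5)^3 = 27*(a^3)^5 by ring, ha3]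
  have hstepB : 1/(9*a^5) ≤ 1/(6*c^2) - 1/(6*a^2) := by
    have h18 : 18*a^2*(c^2*(3*a^3+2)) ≤ 18*a^2*(3*a^5) :=
      mul_le_mul_of_nonneg_left hkey (by positivity)
    rw [div_sub_div _ _ (by positivity) (by positivity), div_le_div_iff₀ (by positivity) (by positivity)]
    nlinarith [h18]
  calc b*(1-a/b)^2 = (b-a)^2/b := h1
    _ ≤ 1/(9*a^5) := hstepA
    _ ≤ 1/(6*c^2) - 1/(6*a^2) := hstepB

private lemma step (k : ℕ) :
    ((k:ℝ) + 5)^((1:ℝ)/3) * (1 - ((k:ℝ) + 4)^((1:ℝ)/3) / ((k:ℝ) + 5)^((1:ℝ)/3))^2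
      ≤ 1/(6*((k:ℝ)+3)^((2:ℝ)/3)) - 1/(6*(((k:ℝ)+1)+3)^((2:ℝ)/3)) := by
  have h := step' ((k:ℝ)+4) (by have := Nat.cast_nonneg (α := ℝ) k; linarith)
  rw [show (k:ℝ)+4+1 = (k:ℝ)+5 by ring, show (k:ℝ)+4-1 = (k:ℝ)+3 by ring] at h
  rw [show (k:ℝ)+1+3 = (k:ℝ)+4 by ring]
  exact h

theorem sum_rpow_diff_sq_upper_bound (K : ℕ) (hK : 1 ≤ K) :
    ∑ k ∈ Finset.range K,
        ((k:ℝ) + 5)^((1:ℝ)/3) * (1 - ((k:ℝ) + 4)^((1:ℝ)/3) / ((k:ℝ) + 5)^((1:ℝ)/3))^2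
      ≤ 1 / (6 * (9:ℝ)^((1:ℝ)/3)) := by
  set f : ℕ → ℝ := fun k => 1/(6*((k:ℝ)+3)^((2:ℝ)/3)) with hf
  calc ∑ k ∈ Finset.range K,
        ((k:ℝ) + 5)^((1:ℝ)/3) * (1 - ((k:ℝ) + 4)^((1:ℝ)/3) / ((k:ℝ) + 5)^((1:ℝ)/3))^2
      ≤ ∑ k ∈ Finset.range K, (f k - f (k+1)) := by
        apply Finset.sum_le_sum
        intro k _
        have := step k
        simp only [hf]
        push_cast
        exact this
    _ = f 0 - f K := Finset.sum_range_sub' f K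
    _ ≤ f 0 := by
        have : 0 ≤ f K := by simp only [hf]; positivity
        linarith
    _ = 1 / (6 * (9:ℝ)^((1:ℝ)/3)) := by
        simp only [hf]
        norm_num
        rw [show (9:ℝ) = 3^(2:ℕ) by norm_num, ← Real.rpow_natCast (3:ℝ) 2,
          ← Real.rpow_mul (by norm_num)]
        norm_num
end

section
/- Let L > 0 and 0 < η ≤ 4^{1/3}/8 be reals. For k ≥ 0 set η_k = η/(L(k+4)^{1/3}) and β_k = (1 + 24η_k²L² − η_{k+1}/η_k)/(1 + 4η_k²L²). Then for every integer K ≥ 1, ∑_{k=0}^{K−1} β_k²/η_{k+1} ≤ 1152 η³ L (5/4)^{1/3} ( log(K+3) − log 3 ) + L/(3·9^{1/3} η). -/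
lemma rthird_cube (a : ℝ) (ha : 0 < a) : (a^((1:ℝ)/3))^3 = a := by
  rw [← Real.rpow_natCast (a^((1:ℝ)/3)) 3, ← Real.rpow_mul ha.le]
  norm_num

lemma neg_two_thirds (a : ℝ) (ha : 0 < a) : a^(-(2:ℝ)/3) = 1/((a^((1:ℝ)/3))^2) := by
  have h1 : ((a^((1:ℝ)/3))^2 : ℝ) = a^((2:ℝ)/3) := by
    rw [← Real.rpow_natCast (a^((1:ℝ)/3)) 2, ← Real.rpow_mul ha.le]; norm_num
  rw [h1, show (-(2:ℝ)/3) = -((2:ℝ)/3) by norm_num, Real.rpow_neg ha.le, one_div]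

lemma cube_diff (u v : ℝ) (hu : 0 < u) (huv : u ≤ v) (h : v^3 = u^3 + 1) :
    v - u ≤ 1/(3*u^2) := by
  rw [le_div_iff₀ (by positivity)]
  nlinarith [mul_nonneg (sq_nonneg (v-u)) (by linarith : (0:ℝ) ≤ v + 2*u)]

lemma alg2 (u v : ℝ) (hu : 0 < u) (huv : u ≤ v) (h : v^3 = u^3 + 1) :
    2/(3*v^5) ≤ 1/u^2 - 1/v^2 := by
  have hv : 0 < v := lt_of_lt_of_le hu huv
  rw [div_sub_div _ _ (by positivity) (by positivity),
    div_le_div_iff₀ (by positivity) (by positivity)]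
  have hfac : (v - u) * (v^2 + u*v + u^2) = 1 := by linear_combination h
  have hpos : (0:ℝ) < v^2 + u*v + u^2 := by positivity
  have a1 : u^2*v^4 ≤ v^2*v^4 :=
    mul_le_mul_of_nonneg_right (pow_le_pow_left₀ hu.le huv 2) (by positivity)
  have a2 : u^2*(u*v^3) ≤ v^2*(u*v^3) :=
    mul_le_mul_of_nonneg_right (pow_le_pow_left₀ hu.le huv 2) (by positivity)
  have a3 : u^3*(u*v^2) ≤ v^3*(u*v^2) :=
    mul_le_mul_of_nonneg_right (pow_le_pow_left₀ hu.le huv 3) (by positivity)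
  have a4 : u*v^5 ≤ v*v^5 := mul_le_mul_of_nonneg_right huv (by positivity)
  have hpoly : 2*(u^2*v^2) * (v^2+u*v+u^2) ≤ ((1*v^2 - u^2*1) * (3*v^5)) * (v^2+u*v+u^2) := by
    have e : ((1*v^2 - u^2*1) * (3*v^5)) * (v^2+u*v+u^2)
        = 3*v^5*(v+u) * ((v-u)*(v^2+u*v+u^2)) := by ring
    rw [e, hfac]
    nlinarith [a1, a2, a3, a4]
  exact le_of_mul_le_mul_right hpoly hpos

lemma term_bound (L η : ℝ) (hL : 0 < L) (hη : 0 < η) (k : ℕ) :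
    ((1 + 24 * (η/(L*((k:ℝ)+4)^((1:ℝ)/3)))^2 * L^2
        - (η/(L*((k:ℝ)+5)^((1:ℝ)/3))) / (η/(L*((k:ℝ)+4)^((1:ℝ)/3))))
      / (1 + 4 * (η/(L*((k:ℝ)+4)^((1:ℝ)/3)))^2 * L^2))^2
      / (η/(L*((k:ℝ)+5)^((1:ℝ)/3)))
    ≤ 1152*η^3*L*((5:ℝ)/4)^((1:ℝ)/3) * (Real.log ((k:ℝ)+4) - Real.log ((k:ℝ)+3))
      + (L/(3*η)) * (((k:ℝ)+3)^(-(2:ℝ)/3) - ((k:ℝ)+4)^(-(2:ℝ)/3)) := by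
  have h3 : (0:ℝ) < (k:ℝ)+3 := by positivity
  have h4 : (0:ℝ) < (k:ℝ)+4 := by positivity
  have h5 : (0:ℝ) < (k:ℝ)+5 := by positivity
  have hru : ((k:ℝ)+3)^(-(2:ℝ)/3) = 1/(((k:ℝ)+3)^((1:ℝ)/3))^2 := neg_two_thirds _ h3
  have hrv : ((k:ℝ)+4)^(-(2:ℝ)/3) = 1/(((k:ℝ)+4)^((1:ℝ)/3))^2 := neg_two_thirds _ h4
  rw [hru, hrv]
  set u := ((k:ℝ)+3)^((1:ℝ)/3) with hu_def
  set v := ((k:ℝ)+4)^((1:ℝ)/3) with hv_def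
  set w := ((k:ℝ)+5)^((1:ℝ)/3) with hw_def
  have hu : 0 < u := Real.rpow_pos_of_pos h3 _
  have hv : 0 < v := Real.rpow_pos_of_pos h4 _
  have hw : 0 < w := Real.rpow_pos_of_pos h5 _
  have hu3 : u^3 = (k:ℝ)+3 := rthird_cube _ h3
  have hv3 : v^3 = (k:ℝ)+4 := rthird_cube _ h4
  have hw3 : w^3 = (k:ℝ)+5 := rthird_cube _ h5
  have huv : u ≤ v := Real.rpow_le_rpow h3.le (by linarith) (by norm_num)
  have hvw : v ≤ w := Real.rpow_le_rpow h4.le (by linarith) (by norm_num)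
  clear_value u v w
  clear hu_def hv_def hw_def hru hrv
  have hβeq : (1 + 24*(η/(L*v))^2*L^2 - (η/(L*w))/(η/(L*v)))/(1 + 4*(η/(L*v))^2*L^2)
      = (1 + 24*(η^2/v^2) - v/w)/(1 + 4*(η^2/v^2)) := by
    rw [div_eq_div_iff (by positivity) (by positivity)]
    field_simp
  rw [hβeq]
  have h2 : (0:ℝ) ≤ η^2/v^2 := by positivity
  have hNnn : 0 ≤ 1 + 24*(η^2/v^2) - v/w := by
    have h1 : v/w ≤ 1 := (div_le_one hw).2 hvw
    linarith
  have hD1 : (1:ℝ) ≤ 1 + 4*(η^2/v^2) := by linarith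
  have hβle : (1 + 24*(η^2/v^2) - v/w)/(1 + 4*(η^2/v^2)) ≤ 1 + 24*(η^2/v^2) - v/w :=
    div_le_self hNnn hD1
  have hβnn : 0 ≤ (1 + 24*(η^2/v^2) - v/w)/(1 + 4*(η^2/v^2)) :=
    div_nonneg hNnn (by linarith)
  have hsq : ((1 + 24*(η^2/v^2) - v/w)/(1 + 4*(η^2/v^2)))^2
      ≤ 2*(1 - v/w)^2 + 1152*(η^2/v^2)^2 := by
    have h1 := pow_le_pow_left₀ hβnn hβle 2
    nlinarith [sq_nonneg ((1 - v/w) - 24*(η^2/v^2))]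
  have hdiv : ((1 + 24*(η^2/v^2) - v/w)/(1 + 4*(η^2/v^2)))^2 / (η/(L*w))
      = ((1 + 24*(η^2/v^2) - v/w)/(1 + 4*(η^2/v^2)))^2 * ((L*w)/η) := by
    rw [div_div_eq_mul_div, mul_div_assoc]
  have hmono : ((1 + 24*(η^2/v^2) - v/w)/(1 + 4*(η^2/v^2)))^2 * ((L*w)/η)
      ≤ (2*(1 - v/w)^2 + 1152*(η^2/v^2)^2) * ((L*w)/η) :=
    mul_le_mul_of_nonneg_right hsq (by positivity)
  -- part B
  have hc3 : (((5:ℝ)/4)^((1:ℝ)/3))^3 = 5/4 := rthird_cube _ (by norm_num)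
  have hcpos : (0:ℝ) < ((5:ℝ)/4)^((1:ℝ)/3) := Real.rpow_pos_of_pos (by norm_num) _
  have hc : w ≤ ((5:ℝ)/4)^((1:ℝ)/3) * v := by
    have hk0 : (0:ℝ) ≤ (k:ℝ) := Nat.cast_nonneg k
    have h1 : w^3 ≤ (((5:ℝ)/4)^((1:ℝ)/3)*v)^3 := by
      rw [mul_pow, hc3, hv3, hw3]; linarith
    exact le_of_pow_le_pow_left₀ (by norm_num) (by positivity) h1
  have hlog : 1/((k:ℝ)+4) ≤ Real.log ((k:ℝ)+4) - Real.log ((k:ℝ)+3) := by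
    have hx : Real.log (((k:ℝ)+3)/((k:ℝ)+4)) ≤ ((k:ℝ)+3)/((k:ℝ)+4) - 1 :=
      Real.log_le_sub_one_of_pos (by positivity)
    rw [Real.log_div (by positivity) (by positivity)] at hx
    have he : ((k:ℝ)+3)/((k:ℝ)+4) - 1 = -(1/((k:ℝ)+4)) := by
      field_simp
      norm_num
    rw [he] at hx
    linarith
  have hB : 1152*(η^2/v^2)^2 * ((L*w)/η)
      ≤ 1152*η^3*L*((5:ℝ)/4)^((1:ℝ)/3) * (Real.log ((k:ℝ)+4) - Real.log ((k:ℝ)+3)) := by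
    have e1 : 1152*(η^2/v^2)^2 * ((L*w)/η) = 1152*η^3*L*(w/v^4) := by
      field_simp
    rw [e1]
    have s1 : w/v^4 ≤ (((5:ℝ)/4)^((1:ℝ)/3)*v)/v^4 := by gcongr
    have s2 : (((5:ℝ)/4)^((1:ℝ)/3)*v)/v^4 = ((5:ℝ)/4)^((1:ℝ)/3) * (1/((k:ℝ)+4)) := by
      rw [← hv3]; field_simp
    calc 1152*η^3*L*(w/v^4) ≤ 1152*η^3*L*(((5:ℝ)/4)^((1:ℝ)/3) * (1/((k:ℝ)+4))) := by
          rw [← s2]; exact mul_le_mul_of_nonneg_left s1 (by positivity)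
      _ ≤ 1152*η^3*L*(((5:ℝ)/4)^((1:ℝ)/3) * (Real.log ((k:ℝ)+4) - Real.log ((k:ℝ)+3))) := by
          have := mul_le_mul_of_nonneg_left hlog hcpos.le
          exact mul_le_mul_of_nonneg_left this (by positivity)
      _ = 1152*η^3*L*((5:ℝ)/4)^((1:ℝ)/3) * (Real.log ((k:ℝ)+4) - Real.log ((k:ℝ)+3)) := by
          ring
  -- part A
  have hwd : w - v ≤ 1/(3*v^2) := cube_diff v w hv hvw (by rw [hw3, hv3]; ring)
  have h1snn : 0 ≤ 1 - v/w := by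
    rw [sub_nonneg]; exact (div_le_one hw).2 hvw
  have h1s : 1 - v/w ≤ (1/(3*v^2))/w := by
    have e : 1 - v/w = (w-v)/w := by field_simp
    rw [e]; gcongr
  have hA2 : 2*(1 - v/w)^2 * ((L*w)/η) ≤ (L/(3*η)) * (1/u^2 - 1/v^2) := by
    have hsq2 : (1 - v/w)^2 ≤ ((1/(3*v^2))/w)^2 := pow_le_pow_left₀ h1snn h1s 2
    calc 2*(1 - v/w)^2*((L*w)/η) ≤ 2*(((1/(3*v^2))/w)^2)*((L*w)/η) := by
          exact mul_le_mul_of_nonneg_right (by linarith) (by positivity)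
      _ = (2*L)/(9*η*(v^4*w)) := by field_simp; ring
      _ ≤ (2*L)/(9*η*(v^4*v)) := by gcongr
      _ = (L/(3*η)) * (2/(3*v^5)) := by field_simp; ring
      _ ≤ (L/(3*η)) * (1/u^2 - 1/v^2) :=
          mul_le_mul_of_nonneg_left (alg2 u v hu huv (by rw [hv3, hu3]; ring)) (by positivity)
  calc ((1 + 24*(η^2/v^2) - v/w)/(1 + 4*(η^2/v^2)))^2 / (η/(L*w))
      = ((1 + 24*(η^2/v^2) - v/w)/(1 + 4*(η^2/v^2)))^2 * ((L*w)/η) := hdiv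
    _ ≤ (2*(1 - v/w)^2 + 1152*(η^2/v^2)^2) * ((L*w)/η) := hmono
    _ = 1152*(η^2/v^2)^2 * ((L*w)/η) + 2*(1 - v/w)^2 * ((L*w)/η) := by ring
    _ ≤ 1152*η^3*L*((5:ℝ)/4)^((1:ℝ)/3) * (Real.log ((k:ℝ)+4) - Real.log ((k:ℝ)+3))
        + (L/(3*η)) * (1/u^2 - 1/v^2) := add_le_add hB hA2

theorem pstorm_sum_beta_sq_over_eta_bound
    (L η : ℝ) (hL : 0 < L) (hη : 0 < η) (hη2 : η ≤ (4:ℝ)^((1:ℝ)/3) / 8)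
    (ηk βk : ℕ → ℝ)
    (hηk : ∀ k : ℕ, ηk k = η / (L * ((k:ℝ) + 4)^((1:ℝ)/3)))
    (hβk : ∀ k : ℕ, βk k =
      (1 + 24 * (ηk k)^2 * L^2 - ηk (k+1) / ηk k) / (1 + 4 * (ηk k)^2 * L^2))
    (K : ℕ) (hK : 1 ≤ K) :
    ∑ k ∈ Finset.range K, (βk k)^2 / ηk (k+1)
      ≤ 1152 * η^3 * L * ((5:ℝ)/4)^((1:ℝ)/3) * (Real.log ((K:ℝ) + 3) - Real.log 3)
        + L / (3 * (9:ℝ)^((1:ℝ)/3) * η) := by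
  set g : ℕ → ℝ := fun m =>
    1152*η^3*L*((5:ℝ)/4)^((1:ℝ)/3) * Real.log ((m:ℝ)+3)
      - (L/(3*η)) * ((m:ℝ)+3)^(-(2:ℝ)/3) with hg
  have key : ∀ k ∈ Finset.range K, (βk k)^2 / ηk (k+1) ≤ g (k+1) - g k := by
    intro k _
    have h2 : ηk (k+1) = η/(L*((k:ℝ)+5)^((1:ℝ)/3)) := by
      have e : ((↑(k+1):ℝ)) + 4 = (k:ℝ)+5 := by push_cast; ring
      rw [hηk (k+1), e]
    have hgk1 : g (k+1) = 1152*η^3*L*((5:ℝ)/4)^((1:ℝ)/3) * Real.log ((k:ℝ)+4)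
        - (L/(3*η)) * ((k:ℝ)+4)^(-(2:ℝ)/3) := by
      have e : ((↑(k+1):ℝ)) + 3 = (k:ℝ)+4 := by push_cast; ring
      rw [hg]; simp only []; rw [e]
    rw [hβk k, hηk k, h2, hgk1, hg]
    simp only []
    have h := term_bound L η hL hη k
    exact h.trans (le_of_eq (by ring))
  have htel : ∑ k ∈ Finset.range K, (g (k+1) - g k) = g K - g 0 :=
    Finset.sum_range_sub g K
  have hsum : ∑ k ∈ Finset.range K, (βk k)^2 / ηk (k+1) ≤ g K - g 0 := by
    rw [← htel]; exact Finset.sum_le_sum key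
  -- final constants
  have h3pos : (0:ℝ) < (3:ℝ) := by norm_num
  have hs : (0:ℝ) < (3:ℝ)^((1:ℝ)/3) := Real.rpow_pos_of_pos h3pos _
  have e9 : (9:ℝ)^((1:ℝ)/3) = ((3:ℝ)^((1:ℝ)/3))^2 := by
    have a : ((9:ℝ)^((1:ℝ)/3))^3 = 9 := rthird_cube 9 (by norm_num)
    have b : (((3:ℝ)^((1:ℝ)/3))^2)^3 = 9 := by
      have c := rthird_cube 3 (by norm_num : (0:ℝ) < 3)
      calc (((3:ℝ)^((1:ℝ)/3))^2)^3 = (((3:ℝ)^((1:ℝ)/3))^3)^2 := by ring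
        _ = 9 := by rw [c]; norm_num
    have h9p : (0:ℝ) ≤ (9:ℝ)^((1:ℝ)/3) := (Real.rpow_pos_of_pos (by norm_num) _).le
    have h3p : (0:ℝ) ≤ ((3:ℝ)^((1:ℝ)/3))^2 := by positivity
    apply le_antisymm
    · exact le_of_pow_le_pow_left₀ (n := 3) (by norm_num) h3p (by rw [a, b])
    · exact le_of_pow_le_pow_left₀ (n := 3) (by norm_num) h9p (by rw [a, b])
  have h32 : (3:ℝ)^(-(2:ℝ)/3) = 1/(((3:ℝ)^((1:ℝ)/3))^2) := neg_two_thirds 3 h3pos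
  have hconst : (L/(3*η)) * ((3:ℝ))^(-(2:ℝ)/3) = L / (3 * (9:ℝ)^((1:ℝ)/3) * η) := by
    rw [h32, e9]
    field_simp
  have hg0 : g 0 = 1152*η^3*L*((5:ℝ)/4)^((1:ℝ)/3) * Real.log 3
      - (L/(3*η)) * ((3:ℝ))^(-(2:ℝ)/3) := by
    rw [hg]; norm_num
  have hgK : g K = 1152*η^3*L*((5:ℝ)/4)^((1:ℝ)/3) * Real.log ((K:ℝ)+3)
      - (L/(3*η)) * (((K:ℝ)+3))^(-(2:ℝ)/3) := by rw [hg]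
  have hnn : 0 ≤ (L/(3*η)) * (((K:ℝ)+3))^(-(2:ℝ)/3) := by positivity
  rw [hg0, hgK] at hsum
  have hring : 1152*η^3*L*((5:ℝ)/4)^((1:ℝ)/3) * (Real.log ((K:ℝ)+3) - Real.log 3)
      = 1152*η^3*L*((5:ℝ)/4)^((1:ℝ)/3) * Real.log ((K:ℝ)+3)
        - 1152*η^3*L*((5:ℝ)/4)^((1:ℝ)/3) * Real.log 3 := by ring
  rw [hring]
  linarith [hsum, hnn, hconst.le, hconst.ge]
end

section
/- For each integer k ≥ 0 let β_k = 3((k+3)^{1/3} − (k+2)^{1/3}), and define Γ_0 = 1 and Γ_k = ∏_{i=0}^{k−1}(1−β_i)² for k ≥ 1. Then for all integers 0 ≤ k < j, Γ_j/Γ_k ≤ exp(−6((j+2)^{1/3} − (k+2)^{1/3})). -/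
lemma cube_root_cube (x : ℝ) (hx : 0 ≤ x) : (x ^ ((1:ℝ)/3)) ^ (3:ℕ) = x := by
  rw [← Real.rpow_natCast (x ^ ((1:ℝ)/3)) 3, ← Real.rpow_mul hx]
  norm_num

lemma beta_bounds (i : ℕ) :
    0 < 3 * (((i:ℝ) + 3)^((1:ℝ)/3) - ((i:ℝ) + 2)^((1:ℝ)/3)) ∧
    3 * (((i:ℝ) + 3)^((1:ℝ)/3) - ((i:ℝ) + 2)^((1:ℝ)/3)) < 1 := by
  set a := ((i:ℝ) + 3)^((1:ℝ)/3) with ha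
  set b := ((i:ℝ) + 2)^((1:ℝ)/3) with hb
  have ha3 : a ^ (3:ℕ) = (i:ℝ) + 3 := cube_root_cube _ (by positivity)
  have hb3 : b ^ (3:ℕ) = (i:ℝ) + 2 := cube_root_cube _ (by positivity)
  have ha0 : 0 ≤ a := Real.rpow_nonneg (by positivity) _
  have hb0 : 0 ≤ b := Real.rpow_nonneg (by positivity) _
  have hi : (0:ℝ) ≤ (i:ℝ) := Nat.cast_nonneg i
  have hb1 : 1 < b := by nlinarith [sq_nonneg b, sq_nonneg (b - 1), sq_nonneg (b + 1)]
  have hab : b < a := by nlinarith [sq_nonneg (a + b), sq_nonneg (a - b), sq_nonneg a]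
  constructor
  · nlinarith
  · nlinarith [sq_nonneg (a - b), sq_nonneg (a + b)]

theorem pstorm_gamma_ratio_exp_bound (β Γ : ℕ → ℝ)
    (hβ : ∀ k : ℕ, β k = 3 * (((k:ℝ) + 3)^((1:ℝ)/3) - ((k:ℝ) + 2)^((1:ℝ)/3)))
    (hΓ : ∀ k : ℕ, Γ k = ∏ i ∈ Finset.range k, (1 - β i)^2) :
    ∀ k j : ℕ, k < j →
      Γ j / Γ k ≤ Real.exp (-6 * (((j:ℝ) + 2)^((1:ℝ)/3) - ((k:ℝ) + 2)^((1:ℝ)/3))) := by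
  intro k j hkj
  have hβpos : ∀ i, 0 < β i := fun i => (hβ i) ▸ (beta_bounds i).1
  have hβlt : ∀ i, β i < 1 := fun i => (hβ i) ▸ (beta_bounds i).2
  have hfac_pos : ∀ i, 0 < (1 - β i)^2 := fun i =>
    pow_pos (by linarith [hβlt i]) 2
  have hΓk_pos : 0 < Γ k := by
    rw [hΓ]; exact Finset.prod_pos fun i _ => hfac_pos i
  have hsplit : Γ j = Γ k * ∏ i ∈ Finset.Ico k j, (1 - β i)^2 := by
    rw [hΓ, hΓ, Finset.prod_range_mul_prod_Ico _ hkj.le]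
  have hdiv : Γ j / Γ k = ∏ i ∈ Finset.Ico k j, (1 - β i)^2 := by
    rw [hsplit]; field_simp
  rw [hdiv]
  -- each factor bounded by exp(-2 β i)
  have hle : ∀ i ∈ Finset.Ico k j, (1 - β i)^2 ≤ Real.exp (-2 * β i) := by
    intro i _
    have h1 : 1 - β i ≤ Real.exp (-β i) := by
      have := Real.add_one_le_exp (-β i); linarith
    have h0 : 0 ≤ 1 - β i := by linarith [hβlt i]
    calc (1 - β i)^2 ≤ (Real.exp (-β i))^2 := by
          apply pow_le_pow_left₀ h0 h1
      _ = Real.exp (-2 * β i) := by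
          rw [← Real.exp_nat_mul]; ring_nf
  calc (∏ i ∈ Finset.Ico k j, (1 - β i)^2)
      ≤ ∏ i ∈ Finset.Ico k j, Real.exp (-2 * β i) :=
        Finset.prod_le_prod (fun i _ => (hfac_pos i).le) hle
    _ = Real.exp (∑ i ∈ Finset.Ico k j, (-2 * β i)) := by
        rw [Real.exp_sum]
    _ ≤ Real.exp (-6 * (((j:ℝ) + 2)^((1:ℝ)/3) - ((k:ℝ) + 2)^((1:ℝ)/3))) := by
        apply Real.exp_le_exp.mpr
        have hsum : ∑ i ∈ Finset.Ico k j, β i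
            = 3 * (((j:ℝ) + 2)^((1:ℝ)/3)) - 3 * (((k:ℝ) + 2)^((1:ℝ)/3)) := by
          have hf : ∀ i : ℕ, β i =
              (fun n : ℕ => 3 * (((n:ℝ) + 2)^((1:ℝ)/3))) (i + 1)
              - (fun n : ℕ => 3 * (((n:ℝ) + 2)^((1:ℝ)/3))) i := by
            intro i
            simp only [hβ i]
            push_cast
            ring_nf
          calc ∑ i ∈ Finset.Ico k j, β i
              = ∑ i ∈ Finset.range j, β i - ∑ i ∈ Finset.range k, β i :=
                Finset.sum_Ico_eq_sub _ hkj.le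
            _ = _ := by
                rw [Finset.sum_congr rfl (fun i _ => hf i),
                    Finset.sum_congr rfl (fun i _ => hf i),
                    Finset.sum_range_sub (fun n : ℕ => 3 * (((n:ℝ) + 2)^((1:ℝ)/3))),
                    Finset.sum_range_sub (fun n : ℕ => 3 * (((n:ℝ) + 2)^((1:ℝ)/3)))]
                simp
        have h2 : ∑ i ∈ Finset.Ico k j, (-2 * β i)
            = -2 * ∑ i ∈ Finset.Ico k j, β i := by
          rw [← Finset.mul_sum]
        rw [h2, hsum]; linarith
end

section
/- For all integers k ≥ 0 and K ≥ k+2, ∑_{j=k+1}^{K−1} exp(−6(j+2)^{1/3}) ≤ (1/36) exp(−6(k+2)^{1/3}) ( 18(k+2)^{2/3} + 6(k+2)^{1/3} + 1 ). -/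
noncomputable def Faux (x : ℝ) : ℝ :=
  (1/36) * Real.exp (-6 * x^((1:ℝ)/3)) * (18 * x^((2:ℝ)/3) + 6 * x^((1:ℝ)/3) + 1)

lemma Faux_hasDeriv (x : ℝ) (hx : 0 < x) :
    HasDerivAt Faux (-(Real.exp (-6 * x^((1:ℝ)/3)))) x := by
  have h1 : HasDerivAt (fun y : ℝ => y ^ ((1:ℝ)/3)) ((1:ℝ)/3 * x ^ ((1:ℝ)/3 - 1)) x :=
    Real.hasDerivAt_rpow_const (Or.inl hx.ne')
  have h2 : HasDerivAt (fun y : ℝ => y ^ ((2:ℝ)/3)) ((2:ℝ)/3 * x ^ ((2:ℝ)/3 - 1)) x :=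
    Real.hasDerivAt_rpow_const (Or.inl hx.ne')
  have hexp : HasDerivAt (fun y : ℝ => Real.exp (-6 * y^((1:ℝ)/3)))
      (Real.exp (-6 * x^((1:ℝ)/3)) * (-6 * ((1:ℝ)/3 * x ^ ((1:ℝ)/3 - 1)))) x :=
    (h1.const_mul (-6)).exp
  have hpoly : HasDerivAt (fun y : ℝ => 18 * y^((2:ℝ)/3) + 6 * y^((1:ℝ)/3) + 1)
      (18 * ((2:ℝ)/3 * x ^ ((2:ℝ)/3 - 1)) + 6 * ((1:ℝ)/3 * x ^ ((1:ℝ)/3 - 1))) x :=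
    ((h2.const_mul 18).add (h1.const_mul 6)).add_const 1
  have := ((hexp.const_mul ((1:ℝ)/36)).mul hpoly)
  convert this using 1
  · rfl
  · rfl
  · rfl
  have e1 : x^((2:ℝ)/3) * x^((1:ℝ)/3 - 1) = 1 := by
    rw [← Real.rpow_add hx]; norm_num
  have e2 : x^((1:ℝ)/3) * x^((1:ℝ)/3 - 1) = x^((2:ℝ)/3 - 1) := by
    rw [← Real.rpow_add hx]; norm_num
  set E := Real.exp (-6 * x^((1:ℝ)/3))
  ring_nf
  nlinarith [e1, e2, Real.exp_pos (-6 * x^((1:ℝ)/3))]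

lemma Faux_nonneg (x : ℝ) (hx : 0 ≤ x) : 0 ≤ Faux x := by
  unfold Faux
  have := Real.exp_pos (-6 * x^((1:ℝ)/3))
  have := Real.rpow_nonneg hx ((1:ℝ)/3)
  have := Real.rpow_nonneg hx ((2:ℝ)/3)
  positivity

lemma Faux_step (t : ℝ) (ht : 1 ≤ t) :
    Real.exp (-6 * (t+1)^((1:ℝ)/3)) ≤ Faux t - Faux (t+1) := by
  have hlt : t < t + 1 := by linarith
  obtain ⟨c, hc, heq⟩ := exists_hasDerivAt_eq_slope Faux
    (fun y => -(Real.exp (-6 * y^((1:ℝ)/3)))) hlt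
    (fun y hy => (Faux_hasDeriv y (by have := hy.1; linarith)).continuousAt.continuousWithinAt)
    (fun y hy => Faux_hasDeriv y (by have := hy.1.le; linarith))
  have hF : Faux t - Faux (t+1) = Real.exp (-6 * c^((1:ℝ)/3)) := by
    have : (t + 1) - t = 1 := by ring
    rw [this, div_one] at heq
    linarith [heq]
  rw [hF]
  apply Real.exp_le_exp.2
  have hc0 : (0:ℝ) ≤ c := by have := hc.1; linarith
  have : c ^ ((1:ℝ)/3) ≤ (t+1) ^ ((1:ℝ)/3) :=
    Real.rpow_le_rpow hc0 hc.2.le (by norm_num)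
  linarith

theorem sum_exp_neg_rpow_third_bound (k K : ℕ) (hK : k + 2 ≤ K) :
    ∑ j ∈ Finset.Ico (k+1) K, Real.exp (-6 * ((j:ℝ) + 2)^((1:ℝ)/3))
      ≤ (1/36) * Real.exp (-6 * ((k:ℝ) + 2)^((1:ℝ)/3))
        * (18 * ((k:ℝ) + 2)^((2:ℝ)/3) + 6 * ((k:ℝ) + 2)^((1:ℝ)/3) + 1) := by
  set g : ℕ → ℝ := fun j => Faux ((j:ℝ) + 1) with hg
  have tel : ∀ n, k + 1 ≤ n → ∑ j ∈ Finset.Ico (k+1) n, (g j - g (j+1))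
      = g (k+1) - g n := by
    intro n hn
    induction n, hn using Nat.le_induction with
    | base => simp
    | succ n hn ih =>
      rw [Finset.sum_Ico_succ_top hn, ih]; ring
  have hsum : ∑ j ∈ Finset.Ico (k+1) K, Real.exp (-6 * ((j:ℝ) + 2)^((1:ℝ)/3))
      ≤ ∑ j ∈ Finset.Ico (k+1) K, (g j - g (j+1)) := by
    apply Finset.sum_le_sum
    intro j hj
    have hj1 : k + 1 ≤ j := (Finset.mem_Ico.1 hj).1
    have h1 : (1:ℝ) ≤ (j:ℝ) + 1 := by have := Nat.cast_nonneg (α := ℝ) j; linarith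
    have := Faux_step ((j:ℝ) + 1) h1
    simp only [hg]
    push_cast
    convert this using 3
    · rfl
    · ring
  have hK1 : k + 1 ≤ K := by omega
  rw [tel K hK1] at hsum
  have hgK : 0 ≤ g K := Faux_nonneg _ (by positivity)
  have : g (k+1) = (1/36) * Real.exp (-6 * ((k:ℝ) + 2)^((1:ℝ)/3))
        * (18 * ((k:ℝ) + 2)^((2:ℝ)/3) + 6 * ((k:ℝ) + 2)^((1:ℝ)/3) + 1) := by
    simp only [hg, Faux]
    push_cast
    ring_nf
  linarith
end

section
/- Let ε > 0, L > 0, σ ≥ 0, m ≥ 1, m₀ > 0 be reals, K ≥ 1 an integer, and 0 < η ≤ 1/4. For integers k ≥ 0 set η_k = η/(L K^{1/3}) and β_k = 3((k+3)^{1/3} − (k+2)^{1/3}). Let (Φ_k) be a real sequence and (E_k), (G_k), (Ḡ_k) nonnegative real sequences such that Φ_k ≥ Φ* for all k ≤ K with Φ* ∈ ℝ, E_0 ≤ σ²/m₀, and for every 0 ≤ k ≤ K−1: Φ_{k+1} − Φ_k ≤ (η_k/2) E_k − (η_k/2)(1 − η_k L) G_k, E_{k+1} ≤ (1−β_k)²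 E_k + 2β_k²σ²/m + (2(1−β_k)² η_k² L²/m) G_k, and Ḡ_k ≤ 2G_k + 2E_k. If K ≥ ( (12L/η)(Φ_0 − Φ*) + (2^{−1/3} + (1/6)·2^{1/3} + 1/36)(8σ²/m₀) + 12σ²L/(η m₀) + (32/(1 − 2^{−2/3})²)(σ²/m) )^{3/2} / ε³, then (1/K) ∑_{k=0}^{K−1} Ḡ_k ≤ ε². -/
set_option maxHeartbeats 1600000

lemma cube_le_cube' (a b : ℝ) (ha : 0 ≤ a) (hb : 0 ≤ b) (h : a^3 ≤ b^3) : a ≤ b := by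
  by_contra hc
  push_neg at hc
  nlinarith [mul_nonneg ha hb, sq_nonneg a, sq_nonneg b,
    mul_pos (lt_of_le_of_lt hb hc) (lt_of_le_of_lt hb hc)]

lemma rt_cube (t : ℝ) (ht : 0 ≤ t) : (t ^ ((1:ℝ)/3))^3 = t := by
  rw [← Real.rpow_natCast (t ^ ((1:ℝ)/3)) 3, ← Real.rpow_mul ht]
  norm_num

lemma keyR (x y : ℝ) (hx : 0 < x) (hy : 0 < y) (hx2 : 2 ≤ x^3) (hy3 : y^3 = x^3 + 1) :
    23*y^2*(1-3*(y-x))^2 + 25 ≤ 23*x^2 := by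
  have hxy : x < y := by nlinarith [sq_nonneg (x-y), sq_nonneg (x+y), mul_pos hx hy]
  have hx125 : (5/4:ℝ) ≤ x := by nlinarith [sq_nonneg (x-5/4), sq_nonneg (x+5/4), mul_pos hx hx]
  have h32 : y^3 ≤ (3/2)*x^3 := by nlinarith
  have h6 : y^6 ≤ (9/4)*x^6 := by nlinarith [pow_pos hx 3, pow_pos hy 3]
  have hy2 : y^2 ≤ (4/3)*x^2 := by
    nlinarith [h6, sq_nonneg (y^2 - (4/3)*x^2), sq_nonneg (y^2 + (4/3)*x^2), pow_pos hx 2,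
      pow_pos hy 2, mul_pos (pow_pos hy 2) (pow_pos hx 2)]
  have hD : 0 < x^2+x*y+y^2 := by positivity
  have h1 : (y-x)*(x^2+x*y+y^2) = 1 := by linear_combination hy3
  have hq : 0 ≤ 63*x^4+63*x^3*y+63*x^2*y^2-46*x^3-46*x^2*y-46*x*y^2-207*y^2+113*y+88*x-23 := by
    nlinarith [hy2, hxy.le, hx125, sq_nonneg (x-y), mul_nonneg (sub_nonneg.2 hy2) (sub_nonneg.2 hx125),
      mul_nonneg (sub_nonneg.2 hxy.le) (sub_nonneg.2 hx125), sq_nonneg (x-5/4), mul_pos hx hy,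
      mul_nonneg (mul_nonneg hx.le hx.le) (sub_nonneg.2 hy2),
      mul_nonneg (mul_nonneg hx.le hx.le) (sub_nonneg.2 hxy.le)]
  have hP : 207*y^2 ≤ (113*y^2-25*x^2-25*x*y-23*x-23*y)*(x^2+x*y+y^2) := by
    have hPeq : (113*y^2-25*x^2-25*x*y-23*x-23*y)*(x^2+x*y+y^2) - 207*y^2
        = 63*x^4+63*x^3*y+63*x^2*y^2-46*x^3-46*x^2*y-46*x*y^2-207*y^2+113*y+88*x-23
          + (113*y + 88*x - 23)*(y^3 - x^3 - 1) := by ring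
    nlinarith [hq, hPeq, hy3]
  have hid : (23*x^2 - 23*y^2*(1-3*(y-x))^2 - 25) * (x^2+x*y+y^2)^2
      = (113*y^2-25*x^2-25*x*y-23*x-23*y)*(x^2+x*y+y^2) - 207*y^2 := by
    linear_combination ((138*y^2-23*x-23*y)*(x^2+x*y+y^2) - 207*y^2*((y-x)*(x^2+x*y+y^2)+1)) * h1
  nlinarith [hid, hP, pow_pos hD 2]

lemma keyS (x y : ℝ) (hx : 0 < x) (hy : 0 < y) (hx2 : 2 ≤ x^3) (hy3 : y^3 = x^3 + 1) :
    9*y^2*(y-x)^2*x^2 ≤ 4/3 := by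
  have hxy : x < y := by nlinarith [sq_nonneg (x-y), sq_nonneg (x+y), mul_pos hx hy]
  have h1 : (y-x)*(x^2+x*y+y^2) = 1 := by linear_combination hy3
  have h3s : 3*x^2*(y-x) ≤ 1 := by
    nlinarith [mul_nonneg (sub_nonneg.2 hxy.le) (sq_nonneg (x-y)),
      mul_nonneg (sub_nonneg.2 hxy.le) (mul_pos hx hy).le]
  have h32 : y^3 ≤ (3/2)*x^3 := by nlinarith
  have h6 : y^6 ≤ (9/4)*x^6 := by nlinarith [pow_pos hx 3, pow_pos hy 3]
  have hy2 : y^2 ≤ (4/3)*x^2 := by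
    nlinarith [h6, sq_nonneg (y^2 - (4/3)*x^2), sq_nonneg (y^2 + (4/3)*x^2), pow_pos hx 2,
      pow_pos hy 2, mul_pos (pow_pos hy 2) (pow_pos hx 2)]
  have hs0 : 0 ≤ 3*x^2*(y-x) := mul_nonneg (by positivity) (sub_nonneg.2 hxy.le)
  have hsq : (3*x^2*(y-x))^2 ≤ 1 := by nlinarith [h3s, hs0]
  have h4 : (3*x^2*(y-x))^2 * y^2 ≤ (4/3)*x^2 := by nlinarith [hsq, pow_pos hy 2, hy2]
  nlinarith [h4, pow_pos hx 2, sq_nonneg (y-x), pow_pos hy 2]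

lemma master_step (η L m σ ν x y a θk θk1 Ek Ek1 Gk βv : ℝ)
    (hη : 0 < η) (hη2 : η ≤ 1/4) (hL : 0 < L) (hm : 1 ≤ m) (hσ : 0 ≤ σ)
    (hν0 : 0 < ν)
    (hx0 : 0 < x) (hy0 : 0 < y) (ha0 : 0 < a)
    (hx2 : 2 ≤ x^3) (hy3' : y^3 = x^3+1) (ha3 : a^3 = x^3 - 1)
    (hxν : x^2 ≤ ν^2 + 1)
    (hβ : βv = 3*(y-x))
    (hθk : θk = (23/25)*x^2) (hθk1 : θk1 = (23/25)*y^2)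
    (hEk : 0 ≤ Ek) (hGk : 0 ≤ Gk)
    (he : Ek1 ≤ (1-βv)^2*Ek + 2*βv^2*σ^2/m + (2*(1-βv)^2*(η/(L*ν))^2*L^2/m)*Gk) :
    θk1*Ek1 - θk*Ek + Ek ≤ (2*σ^2/m)*((92/25)*(x-a)) + (23/200)*Gk := by
  have hm0 : (0:ℝ) < m := lt_of_lt_of_le one_pos hm
  have hθk10 : 0 ≤ θk1 := by rw [hθk1]; positivity
  have hR := keyR x y hx0 hy0 hx2 hy3'
  have hRθ : θk1*(1-βv)^2 ≤ θk - 1 := by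
    rw [hβ, hθk1, hθk]; nlinarith [hR]
  have hax : a ≤ x := by
    apply cube_le_cube' a x ha0.le hx0.le
    rw [ha3]; linarith
  have h1ax : (x-a)*(a^2+a*x+x^2) = 1 := by linear_combination -ha3
  have hxa : 1 ≤ 3*(x - a)*x^2 := by
    nlinarith [h1ax, mul_nonneg (sub_nonneg.2 hax) (sq_nonneg (x-a)),
      mul_nonneg (sub_nonneg.2 hax) (mul_pos ha0 hx0).le, sq_nonneg (x-a)]
  have hS := keyS x y hx0 hy0 hx2 hy3'
  have hsrc : θk1*βv^2 ≤ (92/25)*(x-a) := by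
    rw [hβ, hθk1]
    nlinarith [hS, hxa, pow_pos hx0 2, sq_nonneg (y-x), pow_pos hy0 2]
  have hθν : θk - 1 ≤ (23/25)*ν^2 := by rw [hθk]; nlinarith [hxν]
  have hmul := mul_le_mul_of_nonneg_left he hθk10
  have ht1 : (θk1*(1-βv)^2) * Ek ≤ (θk - 1) * Ek :=
    mul_le_mul_of_nonneg_right hRθ hEk
  have ht2 : (2*σ^2/m)*(θk1*βv^2) ≤ (2*σ^2/m)*((92/25)*(x-a)) := by
    apply mul_le_mul_of_nonneg_left hsrc
    positivity
  have hcoef : (2*(η/(L*ν))^2*L^2/m)*(θk1*(1-βv)^2) ≤ 23/200 := by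
    have hc0 : 0 ≤ θk1*(1-βv)^2 := mul_nonneg hθk10 (sq_nonneg _)
    have hcν : θk1*(1-βv)^2 ≤ (23/25)*ν^2 := le_trans hRθ hθν
    have hpos : (0:ℝ) < 2*(η/(L*ν))^2*L^2/m := by positivity
    calc (2*(η/(L*ν))^2*L^2/m)*(θk1*(1-βv)^2)
        ≤ (2*(η/(L*ν))^2*L^2/m)*((23/25)*ν^2) := mul_le_mul_of_nonneg_left hcν hpos.le
      _ = (46/25)*η^2/m := by field_simp; ring
      _ ≤ (46/25)*η^2 := div_le_self (by positivity) hm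
      _ ≤ 23/200 := by nlinarith [hη.le, hη2]
  have ht3 : ((2*(η/(L*ν))^2*L^2/m)*(θk1*(1-βv)^2)) * Gk ≤ (23/200) * Gk :=
    mul_le_mul_of_nonneg_right hcoef hGk
  have hexp : θk1 * ((1-βv)^2*Ek + 2*βv^2*σ^2/m + (2*(1-βv)^2*(η/(L*ν))^2*L^2/m)*Gk)
      = (θk1*(1-βv)^2) * Ek + (2*σ^2/m)*(θk1*βv^2)
        + ((2*(η/(L*ν))^2*L^2/m)*(θk1*(1-βv)^2)) * Gk := by ring
  rw [hexp] at hmul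
  linarith [hmul, ht1, ht2, ht3]

lemma desc_step (A Ek Gk d r : ℝ) (hA : 0 < A) (hAL : r ≤ 1/4) (hGk : 0 ≤ Gk)
    (hd : d ≤ (A/2)*Ek - (A/2)*(1 - r)*Gk) : (3*A/8)*Gk ≤ -d + (A/2)*Ek := by
  nlinarith [mul_nonneg (mul_nonneg hA.le hGk) (sub_nonneg.2 hAL)]

lemma assemble (SG SE SGb p1 p2 p3 : ℝ) (hSG : 0 ≤ SG) (hSE0 : 0 ≤ SE)
    (hp1 : 0 ≤ p1) (hp2 : 0 ≤ p2) (hp3 : 0 ≤ p3)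
    (h1 : SE ≤ (1461/1000)*p2 + (184/25)*p3 + (23/200)*SG)
    (h2 : (3/8)*SG ≤ p1 + (1/2)*SE)
    (h3 : SGb ≤ 2*SG + 2*SE) :
    SGb ≤ 12*p1 + (8128/1000)*p2 + 128*p3 := by linarith
theorem pstorm_complexity_constant_stepsize_II
    (ε L σ m m₀ : ℝ) (hε : 0 < ε) (hL : 0 < L) (hσ : 0 ≤ σ) (hm : 1 ≤ m) (hm₀ : 0 < m₀)
    (K : ℕ) (hK : 1 ≤ K) (η : ℝ) (hη : 0 < η) (hη2 : η ≤ 1/4)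
    (ηk βk : ℕ → ℝ)
    (hηk : ∀ k : ℕ, ηk k = η / (L * (K:ℝ)^((1:ℝ)/3)))
    (hβk : ∀ k : ℕ, βk k = 3 * (((k:ℝ) + 3)^((1:ℝ)/3) - ((k:ℝ) + 2)^((1:ℝ)/3)))
    (Φ E G Gb : ℕ → ℝ) (Φstar : ℝ)
    (hΦ : ∀ k ≤ K, Φstar ≤ Φ k)
    (hE : ∀ k, 0 ≤ E k) (hG : ∀ k, 0 ≤ G k) (hGb : ∀ k, 0 ≤ Gb k)
    (hE0 : E 0 ≤ σ^2 / m₀)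
    (hdesc : ∀ k < K, Φ (k+1) - Φ k ≤
      (ηk k / 2) * E k - (ηk k / 2) * (1 - ηk k * L) * G k)
    (herr : ∀ k < K, E (k+1) ≤ (1 - βk k)^2 * E k + 2 * (βk k)^2 * σ^2 / m
      + (2 * (1 - βk k)^2 * (ηk k)^2 * L^2 / m) * G k)
    (hbar : ∀ k < K, Gb k ≤ 2 * G k + 2 * E k)
    (hKbig : ( (12 * L / η) * (Φ 0 - Φstar)
        + ((2:ℝ)^(-(1:ℝ)/3) + (1/6) * (2:ℝ)^((1:ℝ)/3) + 1/36) * (8 * σ^2 / m₀)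
        + 12 * σ^2 * L / (η * m₀)
        + (32 / (1 - (2:ℝ)^(-(2:ℝ)/3))^2) * (σ^2 / m) )^((3:ℝ)/2) / ε^3 ≤ (K:ℝ)) :
    (1 / (K:ℝ)) * ∑ k ∈ Finset.range K, Gb k ≤ ε^2 := by
  have hK0 : (0:ℝ) < K := by exact_mod_cast hK
  have hm0 : (0:ℝ) < m := lt_of_lt_of_le one_pos hm
  set ν := (K:ℝ)^((1:ℝ)/3) with hνdef
  have hν0 : 0 < ν := Real.rpow_pos_of_pos hK0 _
  have hν3 : ν^3 = K := rt_cube _ hK0.le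
  have hK1 : (1:ℝ) ≤ (K:ℝ) := by exact_mod_cast hK
  have hν1 : 1 ≤ ν := by
    apply cube_le_cube' 1 ν one_pos.le hν0.le
    rw [hν3]; linarith only [hK1]
  set θ : ℕ → ℝ := fun j => (23/25) * (((j:ℝ)+2)^((1:ℝ)/3))^2 with hθdef
  have hθsucc : ∀ j : ℕ, θ (j+1) = (23/25) * (((j:ℝ)+3)^((1:ℝ)/3))^2 := by
    intro j
    have hc : ((j+1:ℕ):ℝ)+2 = (j:ℝ)+3 := by push_cast; ring
    simp only [hθdef, hc]
  have hθ0 : ∀ j, 0 ≤ θ j := by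
    intro j; simp only [hθdef]; positivity
  set f : ℕ → ℝ := fun j => ((j:ℝ)+1)^((1:ℝ)/3) with hfdef
  have hfsucc : ∀ j : ℕ, f (j+1) = ((j:ℝ)+2)^((1:ℝ)/3) := by
    intro j
    have hc : ((j+1:ℕ):ℝ)+1 = (j:ℝ)+2 := by push_cast; ring
    simp only [hfdef, hc]
  -- per step master inequality
  have hstep : ∀ k < K, θ (k+1) * E (k+1) - θ k * E k + E k ≤
      (2*σ^2/m) * ((92/25)*(f (k+1) - f k)) + (23/200) * G k := by
    intro k hk
    have hx0 : (0:ℝ) < ((k:ℝ)+2)^((1:ℝ)/3) := Real.rpow_pos_of_pos (by positivity) _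
    have hy0 : (0:ℝ) < ((k:ℝ)+3)^((1:ℝ)/3) := Real.rpow_pos_of_pos (by positivity) _
    have ha0 : (0:ℝ) < ((k:ℝ)+1)^((1:ℝ)/3) := Real.rpow_pos_of_pos (by positivity) _
    have hx3 : (((k:ℝ)+2)^((1:ℝ)/3))^3 = (k:ℝ)+2 := rt_cube _ (by positivity)
    have hy3 : (((k:ℝ)+3)^((1:ℝ)/3))^3 = (k:ℝ)+3 := rt_cube _ (by positivity)
    have ha3 : (((k:ℝ)+1)^((1:ℝ)/3))^3 = (k:ℝ)+1 := rt_cube _ (by positivity)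
    have hkc : (0:ℝ) ≤ (k:ℝ) := Nat.cast_nonneg k
    have hkK : (k:ℝ)+2 ≤ (K:ℝ)+1 := by
      have : (k:ℝ)+1 ≤ (K:ℝ) := by exact_mod_cast hk
      linarith
    have hxν : (((k:ℝ)+2)^((1:ℝ)/3))^2 ≤ ν^2 + 1 := by
      apply cube_le_cube' _ _ (sq_nonneg _) (by positivity)
      have e1 : ((((k:ℝ)+2)^((1:ℝ)/3))^2)^3 = (((k:ℝ)+2)^((1:ℝ)/3))^3*(((k:ℝ)+2)^((1:ℝ)/3))^3 := by ring
      rw [e1, hx3]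
      have e3 : 0 ≤ 3*ν^4+3*ν^2-2*ν^3 := by
        have h := mul_nonneg (pow_nonneg hν0.le 3) (sub_nonneg.2 hν1)
        linarith only [h, pow_nonneg hν0.le 3, sq_nonneg ν]
      have e4 : (ν^2+1)^3 - (ν^3+1)^2 = 3*ν^4+3*ν^2-2*ν^3 := by ring
      have e5 : ((k:ℝ)+2)*((k:ℝ)+2) ≤ ((K:ℝ)+1)^2 := by nlinarith only [hkK, hkc]
      have e6 : ((K:ℝ)+1)^2 = (ν^3+1)^2 := by rw [hν3]
      linarith only [e3, e4, e5, e6]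
    have hθk : θ k = (23/25)*(((k:ℝ)+2)^((1:ℝ)/3))^2 := by simp only [hθdef]
    have hfk1 : f (k+1) - f k = ((k:ℝ)+2)^((1:ℝ)/3) - ((k:ℝ)+1)^((1:ℝ)/3) := by
      rw [hfsucc k]
    have he := herr k hk
    rw [hηk k] at he
    rw [hfk1]
    exact master_step η L m σ ν _ _ _ (θ k) (θ (k+1)) (E k) (E (k+1)) (G k) (βk k)
      hη hη2 hL hm hσ hν0 hx0 hy0 ha0
      (by rw [hx3]; linarith) (by rw [hy3, hx3]; ring) (by rw [ha3, hx3]; ring)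
      hxν (hβk k) hθk (hθsucc k) (hE k) (hG k) he
  -- summations
  have htele : ∑ k ∈ Finset.range K, (θ (k+1) * E (k+1) - θ k * E k + E k)
      = (θ K * E K - θ 0 * E 0) + ∑ k ∈ Finset.range K, E k := by
    have t := Finset.sum_range_sub (fun j => θ j * E j) K
    rw [Finset.sum_add_distrib, t]
  have hsrcsum : ∑ k ∈ Finset.range K, ((2*σ^2/m) * ((92/25)*(f (k+1) - f k)) + (23/200) * G k)
      = (2*σ^2/m) * ((92/25)*(f K - f 0)) + (23/200) * ∑ k ∈ Finset.range K, G k := by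
    have t := Finset.sum_range_sub f K
    rw [Finset.sum_add_distrib, ← Finset.mul_sum, ← Finset.mul_sum, ← Finset.mul_sum, t]
  have hsum := Finset.sum_le_sum (fun k hk => hstep k (Finset.mem_range.mp hk))
  rw [htele, hsrcsum] at hsum
  set SG := ∑ k ∈ Finset.range K, G k with hSGdef
  set SE := ∑ k ∈ Finset.range K, E k with hSEdef
  set SGb := ∑ k ∈ Finset.range K, Gb k with hSGbdef
  have hSGnn : 0 ≤ SG := Finset.sum_nonneg (fun i _ => hG i)
  have hSEnn : 0 ≤ SE := Finset.sum_nonneg (fun i _ => hE i)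
  -- bound f K and theta 0
  have hf0 : f 0 = 1 := by
    simp only [hfdef]
    norm_num
  have hfK3 : (f K)^3 = (K:ℝ)+1 := by
    simp only [hfdef]
    exact rt_cube _ (by positivity)
  have hfK0 : 0 ≤ f K := by simp only [hfdef]; positivity
  have hfK : f K ≤ ν + 1 := by
    apply cube_le_cube' _ _ hfK0 (by positivity)
    rw [hfK3]
    linarith only [hν3, sq_nonneg ν, hν0.le]
  have hu3 : ((2:ℝ)^((1:ℝ)/3))^3 = 2 := rt_cube 2 (by norm_num)
  have hu0 : (0:ℝ) < (2:ℝ)^((1:ℝ)/3) := Real.rpow_pos_of_pos (by norm_num) _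
  have h126 : (2:ℝ)^((1:ℝ)/3) ≤ 63/50 := by
    apply cube_le_cube' _ _ hu0.le (by norm_num)
    rw [hu3]; norm_num
  have h125 : (5/4:ℝ) ≤ (2:ℝ)^((1:ℝ)/3) := by
    apply cube_le_cube' _ _ (by norm_num) hu0.le
    rw [hu3]; norm_num
  have hθ0v : θ 0 = (23/25)*(((2:ℝ))^((1:ℝ)/3))^2 := by
    simp only [hθdef]
    norm_num
  have hθ0b : θ 0 ≤ 1461/1000 := by
    rw [hθ0v]
    nlinarith only [h126, hu0.le]
  have hθ0E : θ 0 * E 0 ≤ (1461/1000)*(σ^2/m₀) := by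
    have h1 : θ 0 * E 0 ≤ θ 0 * (σ^2/m₀) := mul_le_mul_of_nonneg_left hE0 (hθ0 0)
    have h2 : θ 0 * (σ^2/m₀) ≤ (1461/1000)*(σ^2/m₀) :=
      mul_le_mul_of_nonneg_right hθ0b (by positivity)
    linarith only [h1, h2]
  have hsrc2 : (2*σ^2/m) * ((92/25)*(f K - f 0)) ≤ (184/25)*((σ^2/m)*ν) := by
    rw [hf0]
    have h1 : f K - 1 ≤ ν := by linarith only [hfK]
    have h2 : (0:ℝ) ≤ σ^2/m := by positivity
    calc (2*σ^2/m) * ((92/25)*(f K - 1)) = (184/25)*((σ^2/m)*(f K - 1)) := by ring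
      _ ≤ (184/25)*((σ^2/m)*ν) := by
          apply mul_le_mul_of_nonneg_left _ (by norm_num)
          exact mul_le_mul_of_nonneg_left h1 h2
  have hθKE : 0 ≤ θ K * E K := mul_nonneg (hθ0 K) (hE K)
  have hSE : SE ≤ (1461/1000)*(σ^2/m₀) + (184/25)*((σ^2/m)*ν) + (23/200)*SG := by
    linarith only [hsum, hθ0E, hsrc2, hθKE]
  -- descent
  set A := η/(L*ν) with hAdef
  have hA0 : 0 < A := by rw [hAdef]; positivity
  have hALeq : A*L = η/ν := by rw [hAdef]; field_simp
  have hALle : A*L ≤ 1/4 := by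
    rw [hALeq, div_le_iff₀ hν0]
    linarith only [hν1, hη2]
  have hdk : ∀ k < K, (3*A/8)*G k ≤ (Φ k - Φ (k+1)) + (A/2)*E k := by
    intro k hk
    have hd := hdesc k hk
    rw [hηk k] at hd
    have h := desc_step A (E k) (G k) (Φ (k+1) - Φ k) (A*L) hA0 hALle (hG k) hd
    linarith only [h]
  have hdsum := Finset.sum_le_sum (fun k hk => hdk k (Finset.mem_range.mp hk))
  have hdl : ∑ k ∈ Finset.range K, (3*A/8)*G k = (3*A/8)*SG := by
    rw [hSGdef, ← Finset.mul_sum]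
  have hdr : ∑ k ∈ Finset.range K, ((Φ k - Φ (k+1)) + (A/2)*E k)
      = (Φ 0 - Φ K) + (A/2)*SE := by
    rw [Finset.sum_add_distrib, ← Finset.mul_sum, Finset.sum_range_sub' Φ, hSEdef]
  rw [hdl, hdr] at hdsum
  have hΦK : Φstar ≤ Φ K := hΦ K le_rfl
  have hgap0 : 0 ≤ Φ 0 - Φstar := by linarith only [hΦ 0 (Nat.zero_le K)]
  have hgapA : Φ 0 - Φstar = A*(ν*((L/η)*(Φ 0 - Φstar))) := by
    rw [hAdef]
    field_simp
  have hdes2 : (3/8)*SG ≤ ν*((L/η)*(Φ 0 - Φstar)) + (1/2)*SE := by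
    apply le_of_mul_le_mul_left _ hA0
    have h : (3*A/8)*SG ≤ (Φ 0 - Φstar) + (A/2)*SE := by linarith only [hdsum, hΦK]
    linarith only [h, hgapA]
  -- bar sum
  have hbsum : SGb ≤ 2*SG + 2*SE := by
    have h := Finset.sum_le_sum (fun k hk => hbar k (Finset.mem_range.mp hk))
    rw [Finset.sum_add_distrib, ← Finset.mul_sum, ← Finset.mul_sum] at h
    exact h
  -- assemble
  have hp1 : 0 ≤ ν*((L/η)*(Φ 0 - Φstar)) :=
    mul_nonneg hν0.le (mul_nonneg (by positivity) hgap0)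
  have hp2 : (0:ℝ) ≤ σ^2/m₀ := by positivity
  have hp3 : (0:ℝ) ≤ (σ^2/m)*ν := by positivity
  have hasm := assemble SG SE SGb (ν*((L/η)*(Φ 0 - Φstar))) (σ^2/m₀) ((σ^2/m)*ν)
    hSGnn hSEnn hp1 hp2 hp3 hSE hdes2 hbsum
  -- constants
  have hinv : (2:ℝ)^(-(1:ℝ)/3) = ((2:ℝ)^((1:ℝ)/3))⁻¹ := by
    have e : (-(1:ℝ)/3) = -((1:ℝ)/3) := by norm_num
    rw [e, Real.rpow_neg (by norm_num : (0:ℝ) ≤ 2)]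
  have hinvlb : (79/100:ℝ) ≤ ((2:ℝ)^((1:ℝ)/3))⁻¹ := by
    rw [← one_div, le_div_iff₀ hu0]
    linarith only [h126]
  have hC1 : (8128/1000:ℝ) ≤ 8*((2:ℝ)^(-(1:ℝ)/3) + (1/6)*(2:ℝ)^((1:ℝ)/3) + 1/36) := by
    rw [hinv]
    linarith only [hinvlb, h125]
  have hdlt1 : (2:ℝ)^(-(2:ℝ)/3) < 1 := by
    have := Real.rpow_lt_one_of_one_lt_of_neg (by norm_num : (1:ℝ) < 2) (by norm_num : -(2:ℝ)/3 < 0)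
    exact this
  have hdhalf : (1/2:ℝ) ≤ (2:ℝ)^(-(2:ℝ)/3) := by
    have h := Real.rpow_le_rpow_of_exponent_le (by norm_num : (1:ℝ) ≤ 2)
      (by norm_num : (-1:ℝ) ≤ -(2:ℝ)/3)
    rw [Real.rpow_neg_one] at h
    norm_num at h
    linarith only [h]
  have hc4 : (128:ℝ) ≤ 32/(1 - (2:ℝ)^(-(2:ℝ)/3))^2 := by
    have h2 : (0:ℝ) < 1 - (2:ℝ)^(-(2:ℝ)/3) := by linarith only [hdlt1]
    rw [le_div_iff₀ (by positivity)]
    nlinarith only [hdhalf, hdlt1.le]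
  -- the big constant
  set W := (12 * L / η) * (Φ 0 - Φstar)
        + ((2:ℝ)^(-(1:ℝ)/3) + (1/6) * (2:ℝ)^((1:ℝ)/3) + 1/36) * (8 * σ^2 / m₀)
        + 12 * σ^2 * L / (η * m₀)
        + (32 / (1 - (2:ℝ)^(-(2:ℝ)/3))^2) * (σ^2 / m) with hWdef
  have hW0 : 0 ≤ W := by
    rw [hWdef]
    have t1 : (0:ℝ) ≤ (12 * L / η) * (Φ 0 - Φstar) := mul_nonneg (by positivity) hgap0
    have t2 : (0:ℝ) ≤ ((2:ℝ)^(-(1:ℝ)/3) + (1/6) * (2:ℝ)^((1:ℝ)/3) + 1/36) * (8 * σ^2 / m₀) := by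
      apply mul_nonneg _ (by positivity)
      positivity
    have t3 : (0:ℝ) ≤ 12 * σ^2 * L / (η * m₀) := by positivity
    have t4 : (0:ℝ) ≤ (32 / (1 - (2:ℝ)^(-(2:ℝ)/3))^2) * (σ^2 / m) :=
      mul_nonneg (le_trans (by norm_num) hc4) (by positivity)
    linarith only [t1, t2, t3, t4]
  have hfinal : SGb ≤ ν * W := by
    have e : ν*W = 12*(ν*((L/η)*(Φ 0 - Φstar)))
        + (8*((2:ℝ)^(-(1:ℝ)/3) + (1/6)*(2:ℝ)^((1:ℝ)/3) + 1/36))*((σ^2/m₀)*ν)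
        + (12*σ^2*L/(η*m₀))*ν
        + (32/(1 - (2:ℝ)^(-(2:ℝ)/3))^2)*((σ^2/m)*ν) := by
      rw [hWdef]; ring
    rw [e]
    have t1 : (8128/1000)*((σ^2/m₀)*ν)
        ≤ (8*((2:ℝ)^(-(1:ℝ)/3) + (1/6)*(2:ℝ)^((1:ℝ)/3) + 1/36))*((σ^2/m₀)*ν) :=
      mul_le_mul_of_nonneg_right hC1 (by positivity)
    have t2 : (8128/1000)*(σ^2/m₀) ≤ (8128/1000)*((σ^2/m₀)*ν) := by
      linarith only [mul_nonneg hp2 (by linarith only [hν1] : (0:ℝ) ≤ ν - 1)]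
    have t3 : (0:ℝ) ≤ (12*σ^2*L/(η*m₀))*ν := by positivity
    have t4 : 128*((σ^2/m)*ν) ≤ (32/(1 - (2:ℝ)^(-(2:ℝ)/3))^2)*((σ^2/m)*ν) :=
      mul_le_mul_of_nonneg_right hc4 hp3
    linarith only [hasm, t1, t2, t3, t4]
  -- from hKbig
  have hW32 : W^((3:ℝ)/2) ≤ (K:ℝ)*ε^3 := by
    rw [div_le_iff₀ (by positivity)] at hKbig
    exact hKbig
  have hW2 : W ≤ ν^2*ε^2 := by
    have h1 : (W^((3:ℝ)/2))^((2:ℝ)/3) ≤ ((K:ℝ)*ε^3)^((2:ℝ)/3) :=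
      Real.rpow_le_rpow (Real.rpow_nonneg hW0 _) hW32 (by norm_num)
    have h2 : (W^((3:ℝ)/2))^((2:ℝ)/3) = W := by
      rw [← Real.rpow_mul hW0]
      norm_num
    have h3 : ((K:ℝ)*ε^3)^((2:ℝ)/3) = ν^2*ε^2 := by
      rw [Real.mul_rpow hK0.le (by positivity)]
      congr 1
      · rw [hνdef, ← Real.rpow_natCast ((K:ℝ)^((1:ℝ)/3)) 2, ← Real.rpow_mul hK0.le]
        norm_num
      · rw [← Real.rpow_natCast ε 3, ← Real.rpow_mul hε.le, ← Real.rpow_natCast ε 2]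
        norm_num
    rw [h2, h3] at h1
    exact h1
  have hfin2 : SGb ≤ (K:ℝ)*ε^2 := by
    calc SGb ≤ ν*W := hfinal
      _ ≤ ν*(ν^2*ε^2) := mul_le_mul_of_nonneg_left hW2 hν0.le
      _ = (K:ℝ)*ε^2 := by rw [← hν3]; ring
  have hgoal : (1/(K:ℝ)) * SGb ≤ (1/(K:ℝ)) * ((K:ℝ)*ε^2) :=
    mul_le_mul_of_nonneg_left hfin2 (by positivity)
  have e2 : (1/(K:ℝ)) * ((K:ℝ)*ε^2) = ε^2 := by
    field_simp
  linarith only [hgoal, e2]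
end
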